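/- arXiv:2511.08963 — 4 statements merged into one kernel-verified Lean document; each statement's English description precedes it below -/
import Mathlib

section
/- Let q be a prime power, d ≥ 1, A > 0, γ ≥ 0, and let S ⊆ F_q^d satisfy |Ŝ(m)| ≤ A q^{−(d+1)/2} (log q)^{γ} for every nonzero m ∈ F_q^d. Then for every E ⊆ F_q^d, the count ν_S(E) = #{(x, y) ∈ E × E : x − y ∈ S} satisfies | ν_S(E) − |E|² |S| q^{−d} | ≤ A q^{(d−1)/2} (log q)^{γ} |E|. In particular, for fixed K, C₀ > 0 and α > (d−1)/2, there is a constant c > 0 such that if additionally | |S| − K q^{d−1} | ≤ C₀ q^{d−1−α} and |E| ≥ c q^{(d+1)/2} (log q)^{γ}, then ν_S(E) ≥ K |E|² / (2q) for all sufficiently large q. -/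
open scoped BigOperators Pointwise

/-- Fourier transform of (the indicator of) a finite set `S ⊆ F_q^d`:
`Ŝ(m) = q^{-d} ∑_{x ∈ S} χ(-m·x)`. -/
noncomputable def ftr {F : Type} [Field F] [Fintype F] {d : ℕ} (χ : AddChar F ℂ)
    (S : Finset (Fin d → F)) (m : Fin d → F) : ℂ :=
  ((Fintype.card F : ℂ) ^ d)⁻¹ * ∑ x ∈ S, χ (-(∑ i, m i * x i))

/-- `S` is a `γ`-Salem set: `|Ŝ(m)| ≤ q^{-d} (log q)^γ |S|^{1/2}` for all `m ≠ 0`. -/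
def IsSalemSet {F : Type} [Field F] [Fintype F] {d : ℕ}
    (χ : AddChar F ℂ) (γ : ℝ) (S : Finset (Fin d → F)) : Prop :=
  ∀ m : Fin d → F, m ≠ 0 →
    ‖ftr χ S m‖ ≤
      ((Fintype.card F : ℝ) ^ d)⁻¹ * Real.log (Fintype.card F) ^ γ *
        (S.card : ℝ) ^ ((1 : ℝ) / 2)

/-- `C ⊆ E` is shattered by the hypothesis class `H_S(E) = {h_y : y ∈ E}`,
`h_y(x) = 1 ↔ x - y ∈ S`. -/
def Shatters {V : Type} [Sub V] (E S C : Finset V) : Prop :=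
  C ⊆ E ∧ ∀ I ⊆ C, ∃ y ∈ E, ∀ x ∈ C, (x - y ∈ S ↔ x ∈ I)

/-- VC-dimension of the hypothesis class `H_S(E)`: the largest size of a shattered
subset of `E`. -/
noncomputable def vcDim {V : Type} [Sub V] (E S : Finset V) : ℕ :=
  sSup {n | ∃ C : Finset V, C.card = n ∧ Shatters E S C}

open Finset
private lemma addChar_map_sum {F : Type} [Field F] (χ : AddChar F ℂ)
    {ι : Type} (s : Finset ι) (f : ι → F) :
    χ (∑ i ∈ s, f i) = ∏ i ∈ s, χ (f i) := by
  classical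
  induction s using Finset.induction_on with
  | empty => simp
  | insert _ _ h ih => rw [Finset.sum_insert h, AddChar.map_add_eq_mul, ih, Finset.prod_insert h]
private lemma sum_char_vec {F : Type} [Field F] [Fintype F] [DecidableEq F] {d : ℕ}
    (χ : AddChar F ℂ) (hχ : χ ≠ 1) (w : Fin d → F) :
    ∑ m : Fin d → F, χ (∑ i, m i * w i) =
      if w = 0 then ((Fintype.card F : ℂ)) ^ d else 0 := by
  have hprim := AddChar.IsPrimitive.of_ne_one hχ
  calc ∑ m : Fin d → F, χ (∑ i, m i * w i)
      = ∑ m : Fin d → F, ∏ i, χ (m i * w i) :=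
        Finset.sum_congr rfl fun m _ => addChar_map_sum χ _ _
    _ = ∏ i, ∑ t : F, χ (t * w i) := by
        rw [Finset.prod_univ_sum]; simp
    _ = ∏ i, (if w i = 0 then ((Fintype.card F : ℂ)) else 0) := by
        refine Finset.prod_congr rfl fun i _ => ?_
        exact_mod_cast AddChar.sum_mulShift (w i) hprim
    _ = if w = 0 then ((Fintype.card F : ℂ)) ^ d else 0 := by
        by_cases hw : w = 0
        · simp [hw, Finset.prod_const, Finset.card_univ]
        · rw [if_neg hw]
          obtain ⟨i, hi⟩ : ∃ i, w i ≠ 0 := by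
            by_contra h; push_neg at h; exact hw (funext h)
          exact Finset.prod_eq_zero (Finset.mem_univ i) (by simp [hi])

private noncomputable def Tsum {F : Type} [Field F] [Fintype F] {d : ℕ} (χ : AddChar F ℂ)
    (E : Finset (Fin d → F)) (m : Fin d → F) : ℂ := ∑ x ∈ E, χ (∑ i, m i * x i)

private lemma edge_est {F : Type} [Field F] [Fintype F] [DecidableEq F] {d : ℕ}
    (χ : AddChar F ℂ) (hχ : χ ≠ 1) (S E : Finset (Fin d → F)) {B : ℝ} (hB : 0 ≤ B)
    (hS : ∀ m : Fin d → F, m ≠ 0 → ‖ftr χ S m‖ ≤ B) :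
    |((((E ×ˢ E).filter (fun p => p.1 - p.2 ∈ S)).card : ℝ))
        - (E.card : ℝ) ^ 2 * (S.card : ℝ) * (((Fintype.card F : ℝ)) ^ d)⁻¹|
      ≤ B * (Fintype.card F : ℝ) ^ d * (E.card : ℝ) := by
  classical
  set q := Fintype.card F with hqdef
  have hqC : ((q : ℂ)) ^ d ≠ 0 := pow_ne_zero _ (Nat.cast_ne_zero.mpr Fintype.card_ne_zero)
  -- conjugation facts
  have hconj : ∀ a : F, χ (-a) = (starRingEnd ℂ) (χ a) := by
    intro a
    rw [AddChar.map_neg_eq_inv, Complex.inv_eq_conj (AddChar.norm_apply χ a)]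
  have hTconj : ∀ m : Fin d → F,
      (starRingEnd ℂ) (Tsum χ E m) = ∑ y ∈ E, χ (-(∑ i, m i * y i)) := by
    intro m
    rw [Tsum, map_sum]
    exact Finset.sum_congr rfl fun y _ => (hconj _).symm
  have hsplitc : ∀ (m x y : Fin d → F),
      χ (∑ i, m i * (x i - y i)) = χ (∑ i, m i * x i) * χ (-(∑ i, m i * y i)) := by
    intro m x y
    rw [← AddChar.map_add_eq_mul]
    congr 1
    rw [← sub_eq_add_neg, ← Finset.sum_sub_distrib]
    exact Finset.sum_congr rfl fun i _ => mul_sub _ _ _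
  -- Fourier inversion pointwise
  have hinv : ∀ x y : Fin d → F,
      ∑ m : Fin d → F, ftr χ S m * χ (∑ i, m i * (x i - y i))
        = (if x - y ∈ S then (1 : ℂ) else 0) := by
    intro x y
    have h1 : ∀ m : Fin d → F,
        ftr χ S m * χ (∑ i, m i * (x i - y i))
          = ((q : ℂ) ^ d)⁻¹ * ∑ s ∈ S, χ (∑ i, m i * ((x - y - s) i)) := by
      intro m
      rw [ftr, mul_assoc]
      congr 1
      rw [Finset.sum_mul]
      refine Finset.sum_congr rfl fun s hs => ?_
      rw [← AddChar.map_add_eq_mul]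
      congr 1
      simp only [Pi.sub_apply]
      rw [neg_add_eq_sub, ← Finset.sum_sub_distrib]
      exact Finset.sum_congr rfl fun i _ => by ring
    calc ∑ m : Fin d → F, ftr χ S m * χ (∑ i, m i * (x i - y i))
        = ∑ m : Fin d → F, ((q : ℂ) ^ d)⁻¹ * ∑ s ∈ S, χ (∑ i, m i * ((x - y - s) i)) :=
          Finset.sum_congr rfl fun m _ => h1 m
      _ = ((q : ℂ) ^ d)⁻¹ * ∑ s ∈ S, ∑ m : Fin d → F, χ (∑ i, m i * ((x - y - s) i)) := by
          rw [← Finset.mul_sum, Finset.sum_comm]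
      _ = ((q : ℂ) ^ d)⁻¹ * ∑ s ∈ S, (if x - y = s then ((q : ℂ)) ^ d else 0) := by
          congr 1
          refine Finset.sum_congr rfl fun s _ => ?_
          rw [sum_char_vec χ hχ (x - y - s)]
          simp [sub_eq_zero, hqdef]
      _ = (if x - y ∈ S then (1 : ℂ) else 0) := by
          rw [Finset.sum_ite_eq]
          split_ifs with h
          · exact inv_mul_cancel₀ hqC
          · exact mul_zero _
  -- count as complex sum
  have hN : ((((E ×ˢ E).filter (fun p => p.1 - p.2 ∈ S)).card : ℂ))
      = ∑ x ∈ E, ∑ y ∈ E, (if x - y ∈ S then (1 : ℂ) else 0) := by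
    rw [Finset.card_filter]
    push_cast
    rw [Finset.sum_product]
  -- main identity
  have key : ((((E ×ˢ E).filter (fun p => p.1 - p.2 ∈ S)).card : ℂ))
      = ∑ m : Fin d → F, ftr χ S m * (Tsum χ E m * (starRingEnd ℂ) (Tsum χ E m)) := by
    rw [hN]
    calc ∑ x ∈ E, ∑ y ∈ E, (if x - y ∈ S then (1 : ℂ) else 0)
        = ∑ x ∈ E, ∑ y ∈ E, ∑ m : Fin d → F, ftr χ S m * χ (∑ i, m i * (x i - y i)) :=
          Finset.sum_congr rfl fun x _ => Finset.sum_congr rfl fun y _ => (hinv x y).symm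
      _ = ∑ x ∈ E, ∑ m : Fin d → F, ∑ y ∈ E, ftr χ S m * χ (∑ i, m i * (x i - y i)) :=
          Finset.sum_congr rfl fun x _ => Finset.sum_comm
      _ = ∑ m : Fin d → F, ∑ x ∈ E, ∑ y ∈ E, ftr χ S m * χ (∑ i, m i * (x i - y i)) :=
          Finset.sum_comm
      _ = ∑ m : Fin d → F, ftr χ S m * (Tsum χ E m * (starRingEnd ℂ) (Tsum χ E m)) := by
          refine Finset.sum_congr rfl fun m _ => ?_
          rw [hTconj m, Tsum, Finset.sum_mul_sum, Finset.mul_sum]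
          refine Finset.sum_congr rfl fun x _ => ?_
          rw [Finset.mul_sum]
          refine Finset.sum_congr rfl fun y _ => ?_
          rw [hsplitc m x y]
  -- Parseval
  have hpars : ∑ m : Fin d → F, ‖Tsum χ E m‖ ^ 2
      = (q : ℝ) ^ d * (E.card : ℝ) := by
    have hc : ∑ m : Fin d → F, Tsum χ E m * (starRingEnd ℂ) (Tsum χ E m)
        = ((q : ℂ)) ^ d * (E.card : ℂ) := by
      calc ∑ m : Fin d → F, Tsum χ E m * (starRingEnd ℂ) (Tsum χ E m)
          = ∑ m : Fin d → F, ∑ x ∈ E, ∑ y ∈ E, χ (∑ i, m i * (x i - y i)) := by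
            refine Finset.sum_congr rfl fun m _ => ?_
            rw [hTconj m, Tsum, Finset.sum_mul_sum]
            exact Finset.sum_congr rfl fun x _ =>
              Finset.sum_congr rfl fun y _ => (hsplitc m x y).symm
        _ = ∑ x ∈ E, ∑ m : Fin d → F, ∑ y ∈ E, χ (∑ i, m i * (x i - y i)) :=
            Finset.sum_comm
        _ = ∑ x ∈ E, ∑ y ∈ E, ∑ m : Fin d → F, χ (∑ i, m i * (x i - y i)) :=
            Finset.sum_congr rfl fun x _ => Finset.sum_comm
        _ = ∑ x ∈ E, ∑ y ∈ E, (if x = y then ((q : ℂ)) ^ d else 0) := by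
            refine Finset.sum_congr rfl fun x _ => Finset.sum_congr rfl fun y _ => ?_
            have h := sum_char_vec χ hχ (x - y)
            simp only [Pi.sub_apply] at h
            rw [h]
            simp [sub_eq_zero, hqdef]
        _ = ((q : ℂ)) ^ d * (E.card : ℂ) := by
            rw [Finset.sum_congr rfl fun x hx => Finset.sum_ite_eq E x fun _ => ((q : ℂ)) ^ d]
            rw [Finset.sum_congr rfl fun x hx => if_pos hx, Finset.sum_const]
            simp [mul_comm]
    have hcast : ((∑ m : Fin d → F, ‖Tsum χ E m‖ ^ 2 : ℝ) : ℂ)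
        = ∑ m : Fin d → F, Tsum χ E m * (starRingEnd ℂ) (Tsum χ E m) := by
      push_cast
      refine Finset.sum_congr rfl fun m _ => ?_
      rw [Complex.mul_conj, ← Complex.sq_norm]
      norm_cast
    have := hcast.trans hc
    exact_mod_cast this
  -- pull out m = 0
  have hftr0 : ftr χ S 0 = ((q : ℂ) ^ d)⁻¹ * (S.card : ℂ) := by
    simp [ftr, hqdef]
  have hT0 : Tsum χ E 0 = (E.card : ℂ) := by
    simp [Tsum]
  have hsplit0 : ((((E ×ˢ E).filter (fun p => p.1 - p.2 ∈ S)).card : ℂ))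
      - ((q : ℂ) ^ d)⁻¹ * (S.card : ℂ) * ((E.card : ℂ) * (E.card : ℂ))
      = ∑ m ∈ (univ : Finset (Fin d → F)).erase 0,
          ftr χ S m * (Tsum χ E m * (starRingEnd ℂ) (Tsum χ E m)) := by
    rw [key, ← Finset.add_sum_erase _ _ (Finset.mem_univ (0 : Fin d → F)),
      hftr0, hT0]
    rw [map_natCast]
    ring
  -- real/complex bridge
  have habs : |((((E ×ˢ E).filter (fun p => p.1 - p.2 ∈ S)).card : ℝ))
      - (E.card : ℝ) ^ 2 * (S.card : ℝ) * (((q : ℝ)) ^ d)⁻¹|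
      = ‖((((E ×ˢ E).filter (fun p => p.1 - p.2 ∈ S)).card : ℂ))
        - ((q : ℂ) ^ d)⁻¹ * (S.card : ℂ) * ((E.card : ℂ) * (E.card : ℂ))‖ := by
    rw [← Real.norm_eq_abs, ← Complex.norm_real]
    congr 1
    push_cast
    ring
  rw [habs, hsplit0]
  calc ‖∑ m ∈ (univ : Finset (Fin d → F)).erase 0,
          ftr χ S m * (Tsum χ E m * (starRingEnd ℂ) (Tsum χ E m))‖
      ≤ ∑ m ∈ (univ : Finset (Fin d → F)).erase 0,
          ‖ftr χ S m * (Tsum χ E m * (starRingEnd ℂ) (Tsum χ E m))‖ :=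
        norm_sum_le _ _
    _ ≤ ∑ m ∈ (univ : Finset (Fin d → F)).erase 0, B * ‖Tsum χ E m‖ ^ 2 := by
        refine Finset.sum_le_sum fun m hm => ?_
        rw [norm_mul, norm_mul, Complex.norm_conj, ← sq]
        exact mul_le_mul_of_nonneg_right (hS m (Finset.ne_of_mem_erase hm)) (sq_nonneg _)
    _ ≤ ∑ m : Fin d → F, B * ‖Tsum χ E m‖ ^ 2 :=
        Finset.sum_le_sum_of_subset_of_nonneg (Finset.erase_subset _ _)
          (fun m _ _ => mul_nonneg hB (sq_nonneg _))
    _ = B * ((q : ℝ) ^ d * (E.card : ℝ)) := by rw [← Finset.mul_sum, hpars]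
    _ = B * (q : ℝ) ^ d * (E.card : ℝ) := by ring

private lemma part_one (d : ℕ) (A γ : ℝ) (hA : 0 < A) :
    ∀ (F : Type) [Field F] [Fintype F] [DecidableEq F],
      ∀ χ : AddChar F ℂ, χ ≠ 1 →
      ∀ S : Finset (Fin d → F),
        (∀ m : Fin d → F, m ≠ 0 →
          ‖ftr χ S m‖ ≤
            A * (Fintype.card F : ℝ) ^ (-(((d : ℝ) + 1) / 2)) *
              Real.log (Fintype.card F) ^ γ) →
        ∀ E : Finset (Fin d → F),
          |((((E ×ˢ E).filter (fun p => p.1 - p.2 ∈ S)).card : ℝ))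
              - (E.card : ℝ) ^ 2 * (S.card : ℝ) * (Fintype.card F : ℝ) ^ (-(d : ℝ))|
            ≤ A * (Fintype.card F : ℝ) ^ (((d : ℝ) - 1) / 2) *
                Real.log (Fintype.card F) ^ γ * (E.card : ℝ) := by
  intro F _ _ _ χ hχ S hS E
  have hq0 : (0 : ℝ) < (Fintype.card F : ℝ) := Nat.cast_pos.mpr Fintype.card_pos
  have hq1 : (1 : ℝ) ≤ (Fintype.card F : ℝ) := Nat.one_le_cast.mpr Fintype.card_pos
  have hL : 0 ≤ Real.log (Fintype.card F) ^ γ :=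
    Real.rpow_nonneg (Real.log_nonneg hq1) γ
  have hB : 0 ≤ A * (Fintype.card F : ℝ) ^ (-(((d : ℝ) + 1) / 2)) *
      Real.log (Fintype.card F) ^ γ :=
    mul_nonneg (mul_nonneg hA.le (Real.rpow_nonneg hq0.le _)) hL
  have h := edge_est χ hχ S E hB hS
  have hpow : ((Fintype.card F : ℝ)) ^ (-(d : ℝ)) = (((Fintype.card F : ℝ)) ^ d)⁻¹ := by
    rw [Real.rpow_neg hq0.le, Real.rpow_natCast]
  rw [hpow]
  refine h.trans_eq ?_
  have hnat : ((Fintype.card F : ℝ)) ^ d = ((Fintype.card F : ℝ)) ^ (d : ℝ) :=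
    (Real.rpow_natCast _ d).symm
  have hqq : (Fintype.card F : ℝ) ^ (-(((d : ℝ) + 1) / 2)) * (Fintype.card F : ℝ) ^ (d : ℝ)
      = (Fintype.card F : ℝ) ^ (((d : ℝ) - 1) / 2) := by
    rw [← Real.rpow_add hq0]
    congr 1
    ring
  calc A * (Fintype.card F : ℝ) ^ (-(((d : ℝ) + 1) / 2)) * Real.log (Fintype.card F) ^ γ *
        (Fintype.card F : ℝ) ^ d * (E.card : ℝ)
      = A * ((Fintype.card F : ℝ) ^ (-(((d : ℝ) + 1) / 2)) * (Fintype.card F : ℝ) ^ (d : ℝ)) *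
          Real.log (Fintype.card F) ^ γ * (E.card : ℝ) := by rw [hnat]; ring
    _ = A * (Fintype.card F : ℝ) ^ (((d : ℝ) - 1) / 2) *
          Real.log (Fintype.card F) ^ γ * (E.card : ℝ) := by rw [hqq]

private lemma part_two
    (d : ℕ) (hd : 1 ≤ d) (A γ : ℝ) (hA : 0 < A) (hγ : 0 ≤ γ)
    (K C₀ α : ℝ) (hK : 0 < K) (hC₀ : 0 < C₀) (hα : ((d : ℝ) - 1) / 2 < α) :
    (∃ c : ℝ, 0 < c ∧ ∃ Q : ℕ,
      ∀ (F : Type) [Field F] [Fintype F] [DecidableEq F],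
        Q ≤ Fintype.card F →
        ∀ χ : AddChar F ℂ, χ ≠ 1 →
        ∀ S : Finset (Fin d → F),
          (∀ m : Fin d → F, m ≠ 0 →
            ‖ftr χ S m‖ ≤
              A * (Fintype.card F : ℝ) ^ (-(((d : ℝ) + 1) / 2)) *
                Real.log (Fintype.card F) ^ γ) →
          |(S.card : ℝ) - K * (Fintype.card F : ℝ) ^ ((d : ℝ) - 1)| ≤
            C₀ * (Fintype.card F : ℝ) ^ ((d : ℝ) - 1 - α) →
          ∀ E : Finset (Fin d → F),
            c * (Fintype.card F : ℝ) ^ (((d : ℝ) + 1) / 2) *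
                Real.log (Fintype.card F) ^ γ ≤ (E.card : ℝ) →
            K * (E.card : ℝ) ^ 2 / (2 * (Fintype.card F : ℝ)) ≤
              (((E ×ˢ E).filter (fun p => p.1 - p.2 ∈ S)).card : ℝ)) := by
  have hd1 : (1 : ℝ) ≤ (d : ℝ) := by exact_mod_cast hd
  have hα0 : 0 < α := lt_of_le_of_lt (by linarith) hα
  refine ⟨4 * A / K, by positivity, ⟨⌈(4 * C₀ / K) ^ (α⁻¹)⌉₊ + 1, ?_⟩⟩
  intro F _ _ _ hQ χ hχ S hSalem hSsize E hE
  set q : ℝ := (Fintype.card F : ℝ) with hqdef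
  have hq0 : (0 : ℝ) < q := Nat.cast_pos.mpr Fintype.card_pos
  have hq1 : (1 : ℝ) ≤ q := Nat.one_le_cast.mpr Fintype.card_pos
  set L : ℝ := Real.log (Fintype.card F) ^ γ with hLdef
  have hL : 0 ≤ L := Real.rpow_nonneg (Real.log_nonneg hq1) γ
  set a : ℝ := q ^ (d : ℝ) with hadef
  set p : ℝ := q ^ (((d : ℝ) - 1) / 2) with hpdef
  set w : ℝ := q ^ α with hwdef
  have ha0 : 0 < a := Real.rpow_pos_of_pos hq0 _
  have hp0 : 0 < p := Real.rpow_pos_of_pos hq0 _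
  have hw0 : 0 < w := Real.rpow_pos_of_pos hq0 _
  set e : ℝ := (E.card : ℝ) with hedef
  have he0 : (0 : ℝ) ≤ e := Nat.cast_nonneg _
  set s : ℝ := (S.card : ℝ) with hsdef
  set ν : ℝ := (((E ×ˢ E).filter (fun p => p.1 - p.2 ∈ S)).card : ℝ) with hνdef
  -- exponent identities
  have e1 : q ^ (-(d : ℝ)) = a⁻¹ := by rw [Real.rpow_neg hq0.le]
  have e2 : q ^ ((d : ℝ) - 1) = a / q := by
    rw [show (d : ℝ) - 1 = (d : ℝ) + (-1) by ring, Real.rpow_add hq0, Real.rpow_neg_one]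
    ring
  have e3 : q ^ ((d : ℝ) - 1 - α) = a / (q * w) := by
    rw [show (d : ℝ) - 1 - α = (d : ℝ) + (-1) + (-α) by ring, Real.rpow_add hq0,
      Real.rpow_add hq0, Real.rpow_neg_one, Real.rpow_neg hq0.le]
    ring
  have e4 : q ^ (((d : ℝ) + 1) / 2) = p * q := by
    rw [show ((d : ℝ) + 1) / 2 = ((d : ℝ) - 1) / 2 + 1 by ring, Real.rpow_add hq0,
      Real.rpow_one]
  -- q^α is large
  have hqα : 4 * C₀ / K ≤ w := by
    have hx : ((4 * C₀ / K) ^ (α⁻¹) : ℝ) ≤ q := by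
      calc (4 * C₀ / K) ^ (α⁻¹) ≤ (⌈(4 * C₀ / K) ^ (α⁻¹)⌉₊ : ℝ) := Nat.le_ceil _
        _ ≤ ((⌈(4 * C₀ / K) ^ (α⁻¹)⌉₊ + 1 : ℕ) : ℝ) := by push_cast; linarith
        _ ≤ q := Nat.cast_le.mpr hQ
    calc 4 * C₀ / K = ((4 * C₀ / K) ^ (α⁻¹)) ^ α :=
          (Real.rpow_inv_rpow (by positivity) hα0.ne').symm
      _ ≤ q ^ α := Real.rpow_le_rpow (by positivity) hx hα0.le
  -- the edge-count estimate
  have h1 := part_one d A γ hA F χ hχ S hSalem E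
  rw [e1] at h1
  have hν' : e ^ 2 * s * a⁻¹ ≤ ν + A * p * L * e := by
    have := abs_le.mp h1
    simp only [← hpdef, ← hLdef, ← hedef, ← hsdef, ← hνdef] at this
    linarith [this.2]
  -- size of S
  rw [e2, e3] at hSsize
  have hs : K * (a / q) - C₀ * (a / (q * w)) ≤ s := by
    have := abs_le.mp hSsize
    linarith [this.1]
  -- t3
  have m1 : K * (e ^ 2 / q) - C₀ * e ^ 2 / (q * w) ≤ s * (e ^ 2 * a⁻¹) := by
    have h := mul_le_mul_of_nonneg_right hs
      (mul_nonneg (sq_nonneg e) (inv_nonneg.mpr ha0.le))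
    have eq1 : (K * (a / q) - C₀ * (a / (q * w))) * (e ^ 2 * a⁻¹)
        = K * (e ^ 2 / q) - C₀ * e ^ 2 / (q * w) := by
      field_simp
    linarith [eq1 ▸ h]
  have t3 : K * (e ^ 2 / q) - C₀ * e ^ 2 / (q * w) - A * p * L * e ≤ ν := by
    have eqx : s * (e ^ 2 * a⁻¹) = e ^ 2 * s * a⁻¹ := by ring
    rw [eqx] at m1
    linarith
  -- t1
  have hw4 : 4 * C₀ ≤ K * w := by
    have := (div_le_iff₀ hK).mp hqα
    linarith
  have t1 : C₀ * e ^ 2 / (q * w) ≤ (K / 4) * (e ^ 2 / q) := by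
    have heq : (K / 4) * (e ^ 2 / q) - C₀ * e ^ 2 / (q * w)
        = e ^ 2 * (K * w - 4 * C₀) / (4 * (q * w)) := by
      field_simp
    have hnn : 0 ≤ e ^ 2 * (K * w - 4 * C₀) / (4 * (q * w)) :=
      div_nonneg (mul_nonneg (sq_nonneg e) (by linarith)) (by positivity)
    linarith [heq ▸ hnn]
  -- t2
  rw [e4] at hE
  have he' : 4 * A * (p * q * L) ≤ e * K := by
    have h := mul_le_mul_of_nonneg_right hE hK.le
    have eqa : 4 * A / K * (p * q) * L * K = 4 * A * (p * q * L) := by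
      field_simp
    linarith [eqa ▸ h]
  have t2 : A * p * L * e ≤ (K / 4) * (e ^ 2 / q) := by
    have h := mul_le_mul_of_nonneg_right he' (div_nonneg he0 (by positivity : (0:ℝ) ≤ 4 * q))
    have eqa : 4 * A * (p * q * L) * (e / (4 * q)) = A * p * L * e := by
      field_simp
    have eqb : e * K * (e / (4 * q)) = (K / 4) * (e ^ 2 / q) := by
      field_simp
    rw [eqa, eqb] at h
    exact h
  have goal_eq : K * e ^ 2 / (2 * q) = (K / 2) * (e ^ 2 / q) := by ring
  rw [goal_eq]
  linarith

/-- edge-count estimate `ν_S(E) = |E|²|S|/q^d + error`, and the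
resulting positive lower bound `ν_S(E) ≥ K|E|²/(2q)` for large `E` and large `q`. -/
theorem edge_count_estimate
    (d : ℕ) (hd : 1 ≤ d) (A γ : ℝ) (hA : 0 < A) (hγ : 0 ≤ γ)
    (K C₀ α : ℝ) (hK : 0 < K) (hC₀ : 0 < C₀) (hα : ((d : ℝ) - 1) / 2 < α) :
    (∀ (F : Type) [Field F] [Fintype F] [DecidableEq F],
      ∀ χ : AddChar F ℂ, χ ≠ 1 →
      ∀ S : Finset (Fin d → F),
        (∀ m : Fin d → F, m ≠ 0 →
          ‖ftr χ S m‖ ≤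
            A * (Fintype.card F : ℝ) ^ (-(((d : ℝ) + 1) / 2)) *
              Real.log (Fintype.card F) ^ γ) →
        ∀ E : Finset (Fin d → F),
          |((((E ×ˢ E).filter (fun p => p.1 - p.2 ∈ S)).card : ℝ))
              - (E.card : ℝ) ^ 2 * (S.card : ℝ) * (Fintype.card F : ℝ) ^ (-(d : ℝ))|
            ≤ A * (Fintype.card F : ℝ) ^ (((d : ℝ) - 1) / 2) *
                Real.log (Fintype.card F) ^ γ * (E.card : ℝ)) ∧
    (∃ c : ℝ, 0 < c ∧ ∃ Q : ℕ,
      ∀ (F : Type) [Field F] [Fintype F] [DecidableEq F],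
        Q ≤ Fintype.card F →
        ∀ χ : AddChar F ℂ, χ ≠ 1 →
        ∀ S : Finset (Fin d → F),
          (∀ m : Fin d → F, m ≠ 0 →
            ‖ftr χ S m‖ ≤
              A * (Fintype.card F : ℝ) ^ (-(((d : ℝ) + 1) / 2)) *
                Real.log (Fintype.card F) ^ γ) →
          |(S.card : ℝ) - K * (Fintype.card F : ℝ) ^ ((d : ℝ) - 1)| ≤
            C₀ * (Fintype.card F : ℝ) ^ ((d : ℝ) - 1 - α) →
          ∀ E : Finset (Fin d → F),
            c * (Fintype.card F : ℝ) ^ (((d : ℝ) + 1) / 2) *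
                Real.log (Fintype.card F) ^ γ ≤ (E.card : ℝ) →
            K * (E.card : ℝ) ^ 2 / (2 * (Fintype.card F : ℝ)) ≤
              (((E ×ˢ E).filter (fun p => p.1 - p.2 ∈ S)).card : ℝ)) := by
  exact ⟨part_one d A γ hA, part_two d hd A γ hA hγ K C₀ α hK hC₀ hα⟩
end

section
/- Fix constants K > 0, C₀ > 0, A > 0, γ ≥ 0, an integer d ≥ 2, and exponents α > (d−1)/2 and 0 ≤ β < (d−1)/2. There exist constants c, c' > 0 such that for every sufficiently large prime power q the following holds: suppose S ⊆ F_q^d satisfies |Ŝ(m)| ≤ A q^{−(d+1)/2} (log q)^{γ} for all nonzero m and | |S| − K q^{d−1} | ≤ C₀ q^{d−1−α}. If E ⊆ F_q^d with |E| ≥ c q^{(d+1)/2} (log q)^{γ}, then for every real M with 0 < M ≤ q^{β}, the set E_M = {x ∈ E : #{y ∈ E : x − y ∈ S} > M} satisfies |E_M| ≥ c' |E|. -/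
open scoped BigOperators Pointwise

set_option maxHeartbeats 1000000

section Aux
open Finset

variable {F : Type} [Field F] [Fintype F] [DecidableEq F] {d : ℕ}

lemma chi_sum (χ : AddChar F ℂ) {n : Type*} (s : Finset n) (f : n → F) :
    χ (∑ i ∈ s, f i) = ∏ i ∈ s, χ (f i) := by
  classical
  induction s using Finset.induction with
  | empty => simp
  | insert _ _ h ih => rw [Finset.sum_insert h, Finset.prod_insert h, AddChar.map_add_eq_mul, ih]

lemma orth {χ : AddChar F ℂ} (hχ : χ ≠ 1) (v : Fin d → F) :
    ∑ m : Fin d → F, χ (∑ i, m i * v i) =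
      if v = 0 then ((Fintype.card F : ℂ)) ^ d else 0 := by
  have hprim : χ.IsPrimitive := AddChar.IsPrimitive.of_ne_one hχ
  calc ∑ m : Fin d → F, χ (∑ i, m i * v i)
      = ∑ m : Fin d → F, ∏ i, χ (m i * v i) := by
        refine Finset.sum_congr rfl fun m _ => ?_; exact chi_sum χ univ _
    _ = ∏ i, ∑ t : F, χ (t * v i) := (Fintype.prod_sum (fun i t => χ (t * v i))).symm
    _ = ∏ i, (if v i = 0 then (Fintype.card F : ℂ) else 0) := by
        refine Finset.prod_congr rfl fun i _ => ?_
        rw [AddChar.sum_mulShift _ hprim]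
        split_ifs <;> simp
    _ = if v = 0 then ((Fintype.card F : ℂ)) ^ d else 0 := by
        by_cases hv : v = 0
        · simp [hv, Finset.prod_const, Finset.card_univ]
        · obtain ⟨i, hi⟩ := Function.ne_iff.mp hv
          rw [if_neg hv]
          exact Finset.prod_eq_zero (mem_univ i) (if_neg (by simpa using hi))

lemma key_sum {χ : AddChar F ℂ} (hχ : χ ≠ 1) (T E : Finset (Fin d → F)) :
    ∑ m : Fin d → F, (∑ s ∈ T, χ (-(∑ i, m i * s i))) *
        ((∑ x ∈ E, χ (∑ i, m i * x i)) * (∑ y ∈ E, χ (-(∑ i, m i * y i))))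
      = ((Fintype.card F : ℂ)) ^ d *
          ∑ x ∈ E, ∑ y ∈ E, (if x - y ∈ T then (1 : ℂ) else 0) := by
  calc ∑ m : Fin d → F, (∑ s ∈ T, χ (-(∑ i, m i * s i))) *
        ((∑ x ∈ E, χ (∑ i, m i * x i)) * (∑ y ∈ E, χ (-(∑ i, m i * y i))))
      = ∑ m : Fin d → F, ∑ y ∈ E, ∑ x ∈ E, ∑ s ∈ T,
          χ (∑ i, m i * (x - y - s) i) := by
        refine Finset.sum_congr rfl fun m _ => ?_
        simp only [Finset.sum_mul, Finset.mul_sum]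
        refine Finset.sum_congr rfl fun y _ => Finset.sum_congr rfl fun x _ =>
          Finset.sum_congr rfl fun s _ => ?_
        rw [← AddChar.map_add_eq_mul, ← AddChar.map_add_eq_mul]
        congr 1
        simp only [Pi.sub_apply, mul_sub, Finset.sum_sub_distrib]
        ring
    _ = ∑ y ∈ E, ∑ x ∈ E, ∑ s ∈ T, ∑ m : Fin d → F,
          χ (∑ i, m i * (x - y - s) i) := by
        rw [Finset.sum_comm]
        refine Finset.sum_congr rfl fun y _ => ?_
        rw [Finset.sum_comm]
        refine Finset.sum_congr rfl fun x _ => ?_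
        rw [Finset.sum_comm]
    _ = ∑ y ∈ E, ∑ x ∈ E, ∑ s ∈ T,
          (if x - y - s = 0 then ((Fintype.card F : ℂ)) ^ d else 0) := by
        refine Finset.sum_congr rfl fun y _ => Finset.sum_congr rfl fun x _ =>
          Finset.sum_congr rfl fun s _ => orth hχ _
    _ = ∑ y ∈ E, ∑ x ∈ E,
          (if x - y ∈ T then ((Fintype.card F : ℂ)) ^ d else 0) := by
        refine Finset.sum_congr rfl fun y _ => Finset.sum_congr rfl fun x _ => ?_
        simp only [sub_eq_zero]
        exact Finset.sum_ite_eq T (x - y) (fun _ => ((Fintype.card F : ℂ)) ^ d)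
    _ = ∑ x ∈ E, ∑ y ∈ E,
          (if x - y ∈ T then ((Fintype.card F : ℂ)) ^ d else 0) := Finset.sum_comm
    _ = ((Fintype.card F : ℂ)) ^ d *
          ∑ x ∈ E, ∑ y ∈ E, (if x - y ∈ T then (1 : ℂ) else 0) := by
        simp only [Finset.mul_sum, mul_ite, mul_one, mul_zero]

lemma count_eq {χ : AddChar F ℂ} (hχ : χ ≠ 1) (T E : Finset (Fin d → F)) :
    ∑ m : Fin d → F, ftr χ T m *
        ((∑ x ∈ E, χ (∑ i, m i * x i)) * (∑ y ∈ E, χ (-(∑ i, m i * y i))))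
      = ∑ x ∈ E, ∑ y ∈ E, (if x - y ∈ T then (1 : ℂ) else 0) := by
  have hq : ((Fintype.card F : ℂ)) ^ d ≠ 0 := by
    have : (Fintype.card F : ℂ) ≠ 0 := Nat.cast_ne_zero.mpr Fintype.card_ne_zero
    exact pow_ne_zero _ this
  have h := key_sum hχ T E
  calc ∑ m : Fin d → F, ftr χ T m *
        ((∑ x ∈ E, χ (∑ i, m i * x i)) * (∑ y ∈ E, χ (-(∑ i, m i * y i))))
      = ((Fintype.card F : ℂ) ^ d)⁻¹ *
          ∑ m : Fin d → F, (∑ s ∈ T, χ (-(∑ i, m i * s i))) *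
            ((∑ x ∈ E, χ (∑ i, m i * x i)) * (∑ y ∈ E, χ (-(∑ i, m i * y i)))) := by
        rw [Finset.mul_sum]
        refine Finset.sum_congr rfl fun m _ => ?_
        rw [ftr]; ring
    _ = ((Fintype.card F : ℂ) ^ d)⁻¹ * (((Fintype.card F : ℂ)) ^ d *
          ∑ x ∈ E, ∑ y ∈ E, (if x - y ∈ T then (1 : ℂ) else 0)) := by rw [h]
    _ = ∑ x ∈ E, ∑ y ∈ E, (if x - y ∈ T then (1 : ℂ) else 0) := by
        rw [← mul_assoc, inv_mul_cancel₀ hq, one_mul]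

lemma parseval {χ : AddChar F ℂ} (hχ : χ ≠ 1) (E : Finset (Fin d → F)) :
    ∑ m : Fin d → F,
        ((∑ x ∈ E, χ (∑ i, m i * x i)) * (∑ y ∈ E, χ (-(∑ i, m i * y i))))
      = ((Fintype.card F : ℂ)) ^ d * (E.card : ℂ) := by
  have h := key_sum hχ ({0} : Finset (Fin d → F)) E
  simp only [Finset.sum_singleton, Pi.zero_apply, mul_zero, Finset.sum_const_zero,
    neg_zero, AddChar.map_zero_eq_one, one_mul, Finset.mem_singleton, sub_eq_zero] at h
  rw [h]
  congr 1
  calc ∑ x ∈ E, ∑ y ∈ E, (if x = y then (1:ℂ) else 0)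
      = ∑ x ∈ E, (if x ∈ E then (1:ℂ) else 0) := by
        refine Finset.sum_congr rfl fun x hx => Finset.sum_ite_eq E x (fun _ => (1:ℂ))
    _ = (E.card : ℂ) := by
        rw [Finset.sum_congr rfl fun x hx => if_pos hx]; simp

lemma conj_chi (χ : AddChar F ℂ) (a : F) : (starRingEnd ℂ) (χ a) = χ (-a) := by
  have hp : 0 < ringChar F :=
    Nat.pos_of_ne_zero (CharP.ringChar_ne_zero_of_finite F)
  rw [AddChar.starComp_apply hp, AddChar.inv_apply]

lemma conj_fsum (χ : AddChar F ℂ) (E : Finset (Fin d → F)) (m : Fin d → F) :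
    (starRingEnd ℂ) (∑ x ∈ E, χ (∑ i, m i * x i)) = ∑ y ∈ E, χ (-(∑ i, m i * y i)) := by
  rw [map_sum]
  exact Finset.sum_congr rfl fun y _ => conj_chi χ _

lemma parseval_real {χ : AddChar F ℂ} (hχ : χ ≠ 1) (E : Finset (Fin d → F)) :
    ∑ m : Fin d → F, ‖∑ x ∈ E, χ (∑ i, m i * x i)‖ ^ 2
      = (Fintype.card F : ℝ) ^ d * (E.card : ℝ) := by
  have h := parseval hχ E
  have h2 : ∀ m : Fin d → F,
      ((∑ x ∈ E, χ (∑ i, m i * x i)) * (∑ y ∈ E, χ (-(∑ i, m i * y i))))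
        = ((‖∑ x ∈ E, χ (∑ i, m i * x i)‖ ^ 2 : ℝ) : ℂ) := by
    intro m
    rw [← conj_fsum χ E m, Complex.mul_conj, Complex.sq_norm]
  rw [Finset.sum_congr rfl (fun m _ => h2 m)] at h
  have := h
  rw [← Complex.ofReal_sum] at this
  exact_mod_cast this

lemma count_lower {χ : AddChar F ℂ} (hχ : χ ≠ 1) (S E : Finset (Fin d → F)) (B : ℝ)
    (hB : 0 ≤ B)
    (hS : ∀ m : Fin d → F, m ≠ 0 → ‖ftr χ S m‖ ≤ B) :
    (S.card : ℝ) * (E.card : ℝ) ^ 2 / (Fintype.card F : ℝ) ^ d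
        - B * (Fintype.card F : ℝ) ^ d * (E.card : ℝ)
      ≤ ∑ z ∈ E, ((E.filter fun y => z - y ∈ S).card : ℝ) := by
  classical
  set f : (Fin d → F) → ℂ := fun m => ∑ x ∈ E, χ (∑ i, m i * x i) with hf
  set g : (Fin d → F) → ℂ := fun m => ∑ y ∈ E, χ (-(∑ i, m i * y i)) with hg
  set N : ℝ := ∑ z ∈ E, ((E.filter fun y => z - y ∈ S).card : ℝ) with hN
  have hqR : (0 : ℝ) < (Fintype.card F : ℝ) := by
    exact_mod_cast Fintype.card_pos
  -- complex identity
  have hNC : (N : ℂ) = ∑ m : Fin d → F, ftr χ S m * (f m * g m) := by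
    rw [count_eq hχ S E, hN]
    push_cast
    refine Finset.sum_congr rfl fun z _ => ?_
    rw [Finset.sum_boole]
  -- value at 0
  have h0 : ftr χ S 0 * (f 0 * g 0)
      = ((S.card : ℂ) * (E.card : ℂ) ^ 2) / (Fintype.card F : ℂ) ^ d := by
    have hftr : ftr χ S 0 = ((Fintype.card F : ℂ) ^ d)⁻¹ * (S.card : ℂ) := by
      rw [ftr]
      congr 1
      simp
    have hf0 : f 0 = (E.card : ℂ) := by simp [hf]
    have hg0 : g 0 = (E.card : ℂ) := by simp [hg]
    rw [hftr, hf0, hg0]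
    ring
  have hsplit : (N : ℂ) - ((S.card : ℂ) * (E.card : ℂ) ^ 2) / (Fintype.card F : ℂ) ^ d
      = ∑ m ∈ Finset.univ.erase (0 : Fin d → F), ftr χ S m * (f m * g m) := by
    rw [hNC, ← h0, ← Finset.add_sum_erase _ _ (Finset.mem_univ (0 : Fin d → F))]
    ring
  -- bound the error sum
  have herr : ‖∑ m ∈ Finset.univ.erase (0 : Fin d → F),
      ftr χ S m * (f m * g m)‖ ≤ B * ((Fintype.card F : ℝ) ^ d * (E.card : ℝ)) := by
    calc ‖∑ m ∈ Finset.univ.erase (0 : Fin d → F), ftr χ S m * (f m * g m)‖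
        ≤ ∑ m ∈ Finset.univ.erase (0 : Fin d → F),
            ‖ftr χ S m * (f m * g m)‖ := by
          exact norm_sum_le _ _
      _ ≤ ∑ m ∈ Finset.univ.erase (0 : Fin d → F), B * ‖f m‖ ^ 2 := by
          refine Finset.sum_le_sum fun m hm => ?_
          have hm0 : m ≠ 0 := Finset.ne_of_mem_erase hm
          have hgf : ‖g m‖ = ‖f m‖ := by
            rw [hg, hf]
            simp only
            rw [← conj_fsum χ E m, Complex.norm_conj]
          rw [norm_mul, norm_mul, hgf]
          have h1 : ‖ftr χ S m‖ ≤ B := hS m hm0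
          have h2 : (0:ℝ) ≤ ‖f m‖ * ‖f m‖ := by positivity
          calc ‖ftr χ S m‖ * (‖f m‖ * ‖f m‖)
              ≤ B * (‖f m‖ * ‖f m‖) :=
                mul_le_mul_of_nonneg_right h1 h2
            _ = B * ‖f m‖ ^ 2 := by ring
      _ ≤ ∑ m : Fin d → F, B * ‖f m‖ ^ 2 := by
          refine Finset.sum_le_sum_of_subset_of_nonneg (Finset.erase_subset _ _) ?_
          intro m _ _
          positivity
      _ = B * ((Fintype.card F : ℝ) ^ d * (E.card : ℝ)) := by
          rw [← Finset.mul_sum, parseval_real hχ E]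
  -- conclude
  set mainR : ℝ := (S.card : ℝ) * (E.card : ℝ) ^ 2 / (Fintype.card F : ℝ) ^ d with hmainR
  have hcast : ((mainR : ℝ) : ℂ) = ((S.card : ℂ) * (E.card : ℂ) ^ 2) / (Fintype.card F : ℂ) ^ d := by
    rw [hmainR]; push_cast; ring
  have habs : |mainR - N| ≤ B * ((Fintype.card F : ℝ) ^ d * (E.card : ℝ)) := by
    have : ((mainR - N : ℝ) : ℂ) = -( (N : ℂ) - ((S.card : ℂ) * (E.card : ℂ) ^ 2) / (Fintype.card F : ℂ) ^ d) := by
      rw [← hcast]; push_cast; ring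
    have habs2 : ‖((mainR - N : ℝ) : ℂ)‖ ≤ B * ((Fintype.card F : ℝ) ^ d * (E.card : ℝ)) := by
      rw [this, norm_neg, hsplit]
      exact herr
    rwa [Complex.norm_real, Real.norm_eq_abs] at habs2
  have := abs_le.mp habs
  linarith [this.2, le_abs_self (mainR - N)]

end Aux

/-- pruning: for each `0 < M ≤ q^β`, the set `E_M` of points of `E`
with more than `M` `S`-neighbours in `E` has `|E_M| ≥ c'|E|`. -/
theorem pruning_lemma
    (K C₀ A γ : ℝ) (hK : 0 < K) (hC₀ : 0 < C₀) (hA : 0 < A) (hγ : 0 ≤ γ)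
    (d : ℕ) (hd : 2 ≤ d) (α β : ℝ)
    (hα : ((d : ℝ) - 1) / 2 < α) (hβ0 : 0 ≤ β) (hβ : β < ((d : ℝ) - 1) / 2) :
    ∃ c c' : ℝ, 0 < c ∧ 0 < c' ∧ ∃ Q : ℕ,
      ∀ (F : Type) [Field F] [Fintype F] [DecidableEq F],
        Q ≤ Fintype.card F →
        ∀ χ : AddChar F ℂ, χ ≠ 1 →
        ∀ S : Finset (Fin d → F),
          (∀ m : Fin d → F, m ≠ 0 →
            ‖ftr χ S m‖ ≤
              A * (Fintype.card F : ℝ) ^ (-(((d : ℝ) + 1) / 2)) *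
                Real.log (Fintype.card F) ^ γ) →
          |(S.card : ℝ) - K * (Fintype.card F : ℝ) ^ ((d : ℝ) - 1)| ≤
            C₀ * (Fintype.card F : ℝ) ^ ((d : ℝ) - 1 - α) →
          ∀ E : Finset (Fin d → F),
            c * (Fintype.card F : ℝ) ^ (((d : ℝ) + 1) / 2) *
                Real.log (Fintype.card F) ^ γ ≤ (E.card : ℝ) →
            ∀ M : ℝ, 0 < M → M ≤ (Fintype.card F : ℝ) ^ β →
              ∃ EM : Finset (Fin d → F), EM ⊆ E ∧
                (∀ x, x ∈ EM ↔ x ∈ E ∧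
                  M < ((E.filter (fun y => x - y ∈ S)).card : ℝ)) ∧
                c' * (E.card : ℝ) ≤ (EM.card : ℝ) := by
    classical
  have hd2 : (2:ℝ) ≤ (d:ℝ) := by exact_mod_cast hd
  set c : ℝ := (8*A + 8)/K with hc
  have hc0 : 0 < c := by positivity
  refine ⟨c, 1/2, hc0, by norm_num, ?_⟩
  have hαpos : (0:ℝ) < α := lt_of_le_of_lt (by linarith : (0:ℝ) ≤ ((d:ℝ)-1)/2) hα
  have hepos : (0:ℝ) < ((d:ℝ)-1)/2 - β := by linarith
  have hev : ∀ᶠ (y : ℝ) in Filter.atTop,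
      (3 ≤ y ∧ 2*C₀/K ≤ y ^ α ∧ 8/(K*c) < y ^ (((d:ℝ)-1)/2 - β)) := by
    have h1 := (tendsto_rpow_atTop hαpos).eventually_ge_atTop (2*C₀/K)
    have h2 := (tendsto_rpow_atTop hepos).eventually_gt_atTop (8/(K*c))
    filter_upwards [Filter.eventually_ge_atTop (3:ℝ), h1, h2] with y hy1 hy2 hy3
    exact ⟨hy1, hy2, hy3⟩
  obtain ⟨x₀, hx₀⟩ := Filter.eventually_atTop.mp hev
  refine ⟨⌈x₀⌉₊, ?_⟩
  intro F _ _ _ hQ χ hχ S hS hScard E hE M hM0 hMβ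
  classical
  set x : ℝ := (Fintype.card F : ℝ) with hxdef
  have hxx0 : x₀ ≤ x := le_trans (Nat.le_ceil x₀) (by rw [hxdef]; exact_mod_cast hQ)
  obtain ⟨hx3, hcond2, hcond3⟩ := hx₀ x hxx0
  have hx0 : (0:ℝ) < x := by linarith
  have hx1 : (1:ℝ) ≤ x := by linarith
  set L : ℝ := Real.log x ^ γ with hLdef
  have hlog1 : 1 ≤ Real.log x := by
    rw [← Real.log_exp 1]
    apply Real.log_le_log (Real.exp_pos 1)
    calc Real.exp 1 ≤ 2.7182818286 := Real.exp_one_lt_d9.le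
      _ ≤ 3 := by norm_num
      _ ≤ x := hx3
  have hL1 : 1 ≤ L := Real.one_le_rpow hlog1 hγ
  have hL0 : 0 < L := lt_of_lt_of_le one_pos hL1
  have hxd : (x:ℝ) ^ (d:ℕ) = x ^ ((d:ℝ)) := (Real.rpow_natCast x d).symm
  have h1 : x ^ (-(((d:ℝ)+1)/2)) * x ^ ((d:ℝ)) = x ^ (((d:ℝ)-1)/2) := by
    rw [← Real.rpow_add hx0]; congr 1; ring
  have h3 : x ^ (((d:ℝ)+1)/2) = x ^ (((d:ℝ)-1)/2) * x := by
    nth_rewrite 3 [← Real.rpow_one x]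
    rw [← Real.rpow_add hx0]; congr 1; ring
  have h2 : x ^ ((d:ℝ)-1) * x = x ^ ((d:ℝ)) := by
    nth_rewrite 2 [← Real.rpow_one x]
    rw [← Real.rpow_add hx0]; congr 1; ring
  have h4 : x ^ ((d:ℝ)-1-α) = x ^ ((d:ℝ)-1) * x ^ (-α) := by
    rw [← Real.rpow_add hx0]; congr 1; try ring
  have h5 : x ^ α * x ^ (-α) = 1 := by
    rw [← Real.rpow_add hx0]; simp
  have h6 : x ^ (((d:ℝ)-1)/2 - β) * x ^ β = x ^ (((d:ℝ)-1)/2) := by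
    rw [← Real.rpow_add hx0]; congr 1; ring
  have hP0 : 0 < x ^ (((d:ℝ)-1)/2) := Real.rpow_pos_of_pos hx0 _
  have hX0 : 0 < x ^ ((d:ℝ)) := Real.rpow_pos_of_pos hx0 _
  have hxβ0 : 0 < x ^ β := Real.rpow_pos_of_pos hx0 _
  set EM := E.filter (fun z => M < ((E.filter fun y => z - y ∈ S).card : ℝ)) with hEMdef
  refine ⟨EM, Finset.filter_subset _ _, fun z => Finset.mem_filter, ?_⟩
  by_contra hcon
  push_neg at hcon
  set Et := E \ EM with hEt
  have hsub : EM ⊆ E := Finset.filter_subset _ _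
  have hcardEt : (Et.card : ℝ) = (E.card : ℝ) - (EM.card : ℝ) := by
    rw [hEt, Finset.card_sdiff_of_subset hsub]
    exact Nat.cast_sub (Finset.card_le_card hsub)
  have hEt_half : (E.card : ℝ)/2 ≤ (Et.card : ℝ) := by
    rw [hcardEt]; linarith
  have hEt_lower : (c/2) * x ^ (((d:ℝ)+1)/2) * L ≤ (Et.card : ℝ) := by
    linarith [hE, hEt_half]
  set t : ℝ := (Et.card : ℝ) with ht
  have ht0 : 0 < t := lt_of_lt_of_le (by positivity) hEt_lower
  set N : ℝ := ∑ z ∈ Et, ((Et.filter fun y => z - y ∈ S).card : ℝ) with hN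
  have hupper : N ≤ x ^ β * t := by
    have hstep : ∀ z ∈ Et, ((Et.filter fun y => z - y ∈ S).card : ℝ) ≤ x ^ β := by
      intro z hz
      rw [hEt, Finset.mem_sdiff] at hz
      obtain ⟨hzE, hzM⟩ := hz
      have hle : ((E.filter fun y => z - y ∈ S).card : ℝ) ≤ M := by
        by_contra hlt
        push_neg at hlt
        exact hzM (Finset.mem_filter.mpr ⟨hzE, hlt⟩)
      have hsub2 : (Et.filter fun y => z - y ∈ S) ⊆ (E.filter fun y => z - y ∈ S) :=
        Finset.filter_subset_filter _ (by rw [hEt]; exact Finset.sdiff_subset)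
      calc ((Et.filter fun y => z - y ∈ S).card : ℝ)
          ≤ ((E.filter fun y => z - y ∈ S).card : ℝ) := by
            exact_mod_cast Finset.card_le_card hsub2
        _ ≤ M := hle
        _ ≤ x ^ β := hMβ
    calc N ≤ ∑ _z ∈ Et, x ^ β := Finset.sum_le_sum hstep
      _ = x ^ β * t := by rw [Finset.sum_const, nsmul_eq_mul, ← ht]; ring
  set B : ℝ := A * x ^ (-(((d:ℝ)+1)/2)) * L with hB
  have hBpos : 0 ≤ B := by positivity
  have hlow := count_lower hχ S Et B hBpos (fun m hm => hS m hm)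
  rw [← hxdef, ← ht, ← hN] at hlow
  have hS1 : K * x ^ ((d:ℝ)-1) - C₀ * x ^ ((d:ℝ)-1-α) ≤ (S.card : ℝ) := by
    have := (abs_le.mp hScard).1
    linarith
  have hS2 : C₀ * x ^ ((d:ℝ)-1-α) ≤ (K/2) * x ^ ((d:ℝ)-1) := by
    rw [h4]
    have hxα0 : 0 < x ^ (-α) := Real.rpow_pos_of_pos hx0 _
    have hmul := mul_le_mul_of_nonneg_right hcond2 hxα0.le
    rw [h5] at hmul
    have h2C : C₀ * x ^ (-α) ≤ K/2 := by
      have h' := mul_le_mul_of_nonneg_left hmul (show (0:ℝ) ≤ K/2 by linarith)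
      have heq' : C₀ * x ^ (-α) = (K/2) * (2*C₀/K * x ^ (-α)) := by
        field_simp
      rw [heq']
      linarith
    calc C₀ * (x ^ ((d:ℝ)-1) * x ^ (-α)) = (C₀ * x ^ (-α)) * x ^ ((d:ℝ)-1) := by ring
      _ ≤ (K/2) * x ^ ((d:ℝ)-1) :=
          mul_le_mul_of_nonneg_right h2C (Real.rpow_pos_of_pos hx0 _).le
  have hScard2 : (K/2) * x ^ ((d:ℝ)-1) ≤ (S.card : ℝ) := by linarith
  have hmain : (K/2) * (t^2/x) ≤ (S.card : ℝ) * t^2 / x ^ (d:ℕ) := by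
    rw [hxd]
    have heq : (K/2) * (t^2/x) = ((K/2) * x ^ ((d:ℝ)-1)) * t^2 / x ^ ((d:ℝ)) := by
      rw [← h2]; field_simp
    rw [heq]
    gcongr
  have herr : B * x ^ (d:ℕ) * t ≤ (K/4) * (t^2/x) := by
    rw [hxd, hB]
    have heq : A * x ^ (-(((d:ℝ)+1)/2)) * L * x ^ ((d:ℝ)) * t
        = A * x ^ (((d:ℝ)-1)/2) * L * t := by
      rw [mul_comm (A * x ^ (-(((d:ℝ)+1)/2)) * L) (x ^ ((d:ℝ)))]
      rw [← h1]; ring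
    rw [heq]
    have htx : (c/2) * x ^ (((d:ℝ)-1)/2) * L ≤ t / x := by
      rw [le_div_iff₀ hx0]
      calc (c/2) * x ^ (((d:ℝ)-1)/2) * L * x
          = (c/2) * (x ^ (((d:ℝ)-1)/2) * x) * L := by ring
        _ = (c/2) * x ^ (((d:ℝ)+1)/2) * L := by rw [← h3]
        _ ≤ t := hEt_lower
    have hKc : (K/4) * ((c/2) * x ^ (((d:ℝ)-1)/2) * L) = (A+1) * x ^ (((d:ℝ)-1)/2) * L := by
      rw [hc]; field_simp; ring
    have hstep : A * x ^ (((d:ℝ)-1)/2) * L ≤ (K/4) * (t / x) := by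
      have hAA : A * x ^ (((d:ℝ)-1)/2) ≤ (A+1) * x ^ (((d:ℝ)-1)/2) :=
        mul_le_mul_of_nonneg_right (by linarith) hP0.le
      calc A * x ^ (((d:ℝ)-1)/2) * L ≤ (A+1) * x ^ (((d:ℝ)-1)/2) * L :=
            mul_le_mul_of_nonneg_right hAA hL0.le
        _ = (K/4) * ((c/2) * x ^ (((d:ℝ)-1)/2) * L) := hKc.symm
        _ ≤ (K/4) * (t / x) := mul_le_mul_of_nonneg_left htx (by linarith)
    calc A * x ^ (((d:ℝ)-1)/2) * L * t ≤ (K/4) * (t/x) * t :=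
          mul_le_mul_of_nonneg_right hstep ht0.le
      _ = (K/4) * (t^2/x) := by ring
  have hNlow : (K/4) * (t^2/x) ≤ N := by
    have hq : (K/2) * (t^2/x) ≤ N + (K/4) * (t^2/x) := by
      calc (K/2) * (t^2/x) ≤ (S.card : ℝ) * t^2 / x ^ (d:ℕ) := hmain
        _ ≤ N + B * x ^ (d:ℕ) * t := by linarith [hlow]
        _ ≤ N + (K/4) * (t^2/x) := by linarith [herr]
    linarith
  have hfin1 : (K/4) * t ≤ x ^ β * x := by
    have hh : (K/4) * (t^2/x) ≤ x ^ β * t := le_trans hNlow hupper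
    have hhx := mul_le_mul_of_nonneg_right hh hx0.le
    have hh2 : ((K/4) * t) * t ≤ (x ^ β * x) * t := by
      calc ((K/4) * t) * t = (K/4) * (t^2/x) * x := by field_simp
        _ ≤ (x ^ β * t) * x := hhx
        _ = (x ^ β * x) * t := by ring
    exact le_of_mul_le_mul_right hh2 ht0
  have hfin2 : (K*c/8) * x ^ (((d:ℝ)-1)/2) ≤ x ^ β := by
    have htlow : (c/2) * (x ^ (((d:ℝ)-1)/2) * x) ≤ t := by
      calc (c/2) * (x ^ (((d:ℝ)-1)/2) * x) = (c/2) * x ^ (((d:ℝ)+1)/2) * 1 := by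
            rw [← h3]; ring
        _ ≤ (c/2) * x ^ (((d:ℝ)+1)/2) * L := by
            apply mul_le_mul_of_nonneg_left hL1 (by positivity)
        _ ≤ t := hEt_lower
    have hstep : (K/4) * ((c/2) * (x ^ (((d:ℝ)-1)/2) * x)) ≤ x ^ β * x :=
      le_trans (mul_le_mul_of_nonneg_left htlow (by linarith)) hfin1
    have h' : ((K*c/8) * x ^ (((d:ℝ)-1)/2)) * x ≤ (x ^ β) * x := by
      calc ((K*c/8) * x ^ (((d:ℝ)-1)/2)) * x
          = (K/4) * ((c/2) * (x ^ (((d:ℝ)-1)/2) * x)) := by ring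
        _ ≤ x ^ β * x := hstep
    exact le_of_mul_le_mul_right h' hx0
  have hfin3 : x ^ β < (K*c/8) * x ^ (((d:ℝ)-1)/2) := by
    have hlt : 8/(K*c) * x ^ β < x ^ (((d:ℝ)-1)/2) := by
      have := mul_lt_mul_of_pos_right hcond3 hxβ0
      rwa [h6] at this
    have hKc0 : (0:ℝ) < K*c/8 := by positivity
    calc x ^ β = (K*c/8) * (8/(K*c) * x ^ β) := by field_simp
      _ < (K*c/8) * x ^ (((d:ℝ)-1)/2) := mul_lt_mul_of_pos_left hlt hKc0
  linarith
end

section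
/- Let P = {(t, t²) : t ∈ ℝ} ∪ {(t, −t²) : t ∈ ℝ} ⊆ ℝ² be the symmetrized parabola. Then no set of four distinct points of ℝ² is shattered by the family of translates of P; that is, for all distinct x¹, x², x³, x⁴ ∈ ℝ² there exists a subset I ⊆ {1, 2, 3, 4} such that no y ∈ ℝ² satisfies (x^i − y ∈ P if and only if i ∈ I). Consequently, the hypothesis class {indicator of (y + P) : y ∈ ℝ²} on the domain ℝ² has VC-dimension at most 3. -/
/-- The symmetrized parabola `P = {(t, t²)} ∪ {(t, -t²)} ⊆ ℝ²`. -/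
def symParabola : Set (ℝ × ℝ) :=
  (Set.range fun t : ℝ => (t, t ^ 2)) ∪ (Set.range fun t : ℝ => (t, -t ^ 2))

lemma cover_iff (p y : ℝ × ℝ) :
    p - y ∈ symParabola ↔
      (p.2 - y.2 = (p.1 - y.1) ^ 2 ∨ p.2 - y.2 = -(p.1 - y.1) ^ 2) := by
  simp only [symParabola, Set.mem_union, Set.mem_range, Prod.ext_iff, Prod.fst_sub,
    Prod.snd_sub]
  constructor
  · rintro (⟨t, ht1, ht2⟩ | ⟨t, ht1, ht2⟩)
    · left; rw [← ht1, ← ht2]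
    · right; rw [← ht1, ← ht2]
  · rintro (h | h)
    · exact Or.inl ⟨p.1 - y.1, rfl, h.symm⟩
    · exact Or.inr ⟨p.1 - y.1, rfl, h.symm⟩

lemma up_of_le {y b x a : ℝ} (h : y - b = (x - a) ^ 2 ∨ y - b = -(x - a) ^ 2)
    (hy : y ≤ b) : y - b = -(x - a) ^ 2 := by
  rcases h with h | h
  · have h0 : (x - a) ^ 2 = 0 := le_antisymm (by linarith) (sq_nonneg _)
    have h1 : y - b = 0 := by rw [h, h0]
    rw [h1, h0]; ring
  · exact h

lemma dn_of_lt {y b x a : ℝ} (h : y - b = (x - a) ^ 2 ∨ y - b = -(x - a) ^ 2)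
    (hy : b < y) : y - b = (x - a) ^ 2 := by
  rcases h with h | h
  · exact h
  · exfalso; nlinarith [sq_nonneg (x - a)]

lemma two_up {x1 x2 y1 y2 a b a' b' : ℝ} (hx : x1 ≠ x2)
    (h1 : y1 - b = -(x1 - a) ^ 2) (h2 : y2 - b = -(x2 - a) ^ 2)
    (h3 : y1 - b' = -(x1 - a') ^ 2) (h4 : y2 - b' = -(x2 - a') ^ 2)
    (hne : ¬(a = a' ∧ b = b')) : False := by
  have key : (x2 - x1) * (2 * (a - a')) = 0 := by
    first
      | linear_combination h1 - h2 - h3 + h4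
      | linear_combination -h1 + h2 + h3 - h4
  rcases mul_eq_zero.1 key with hk | hk
  · exact hx (by linarith)
  · have ha : a = a' := by linarith
    rw [ha] at h1
    exact hne ⟨ha, by linarith⟩

lemma two_dn {x1 x2 y1 y2 a b a' b' : ℝ} (hx : x1 ≠ x2)
    (h1 : y1 - b = (x1 - a) ^ 2) (h2 : y2 - b = (x2 - a) ^ 2)
    (h3 : y1 - b' = (x1 - a') ^ 2) (h4 : y2 - b' = (x2 - a') ^ 2)
    (hne : ¬(a = a' ∧ b = b')) : False := by
  have key : (x2 - x1) * (2 * (a - a')) = 0 := by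
    first
      | linear_combination h1 - h2 - h3 + h4
      | linear_combination -h1 + h2 + h3 - h4
  rcases mul_eq_zero.1 key with hk | hk
  · exact hx (by linarith)
  · have ha : a = a' := by linarith
    rw [ha] at h1
    exact hne ⟨ha, by linarith⟩

lemma sumud {x1 x2 y1 y2 aU bU aD bD : ℝ} (hx : x1 ≠ x2)
    (h1 : y1 - bU = -(x1 - aU) ^ 2) (h2 : y2 - bU = -(x2 - aU) ^ 2)
    (h3 : y1 - bD = (x1 - aD) ^ 2) (h4 : y2 - bD = (x2 - aD) ^ 2) :
    aU + aD = x1 + x2 := by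
  have key : (x2 - x1) * (2 * (x1 + x2 - aU - aD)) = 0 := by
    first
      | linear_combination (h1 - h2) - (h3 - h4)
      | linear_combination -(h1 - h2) + (h3 - h4)
  rcases mul_eq_zero.1 key with hk | hk
  · exact absurd (by linarith : x1 = x2) hx
  · linarith

lemma vieta {x1 x2 y1 y2 a b a' b' : ℝ}
    (hne : ¬(a = a' ∧ b = b'))
    (h1 : y1 - b = -(x1 - a) ^ 2) (h2 : y2 - b = (x2 - a) ^ 2)
    (h3 : y1 - b' = -(x1 - a') ^ 2) (h4 : y2 - b' = (x2 - a') ^ 2) :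
    a + a' = x1 + x2 := by
  have key : (a - a') * (2 * (x1 + x2 - a - a')) = 0 := by
    first
      | linear_combination (h1 - h2) - (h3 - h4)
      | linear_combination -(h1 - h2) + (h3 - h4)
  rcases mul_eq_zero.1 key with hk | hk
  · have ha : a = a' := by linarith
    rw [ha] at h1
    exact absurd ⟨ha, by linarith⟩ hne
  · linarith

lemma three_mix {x1 x2 y1 y2 a1 b1 a2 b2 a3 b3 : ℝ}
    (d12 : ¬(a1 = a2 ∧ b1 = b2)) (d13 : ¬(a1 = a3 ∧ b1 = b3)) (d23 : ¬(a2 = a3 ∧ b2 = b3))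
    (u1 : y1 - b1 = -(x1 - a1) ^ 2) (e1 : y2 - b1 = (x2 - a1) ^ 2)
    (u2 : y1 - b2 = -(x1 - a2) ^ 2) (e2 : y2 - b2 = (x2 - a2) ^ 2)
    (u3 : y1 - b3 = -(x1 - a3) ^ 2) (e3 : y2 - b3 = (x2 - a3) ^ 2) : False := by
  have h12 := vieta d12 u1 e1 u2 e2
  have h13 := vieta d13 u1 e1 u3 e3
  have ha : a2 = a3 := by linarith
  rw [ha] at u2
  exact d23 ⟨ha, by linarith⟩

abbrev OkPair (i j m0 m1 m2 : ℕ) : Prop :=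
  (¬(j < m0 ∧ j < m1)) ∧ (¬(j < m0 ∧ j < m2)) ∧ (¬(j < m1 ∧ j < m2)) ∧
  (¬(m0 ≤ i ∧ m1 ≤ i)) ∧ (¬(m0 ≤ i ∧ m2 ≤ i)) ∧ (¬(m1 ≤ i ∧ m2 ≤ i)) ∧
  (¬((i < m0 ∧ m0 ≤ j) ∧ (i < m1 ∧ m1 ≤ j) ∧ (i < m2 ∧ m2 ≤ j)))

set_option synthInstance.maxSize 2000 in
set_option synthInstance.maxHeartbeats 1000000 in
set_option maxHeartbeats 2000000 in
lemma scen : ∀ nF n0 n1 n2 n3 : Fin 5,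
    OkPair 0 1 nF n2 n3 → OkPair 0 2 nF n1 n3 → OkPair 0 3 nF n1 n2 →
    OkPair 1 2 nF n0 n3 → OkPair 1 3 nF n0 n2 → OkPair 2 3 nF n0 n1 →
    ((nF : ℕ) = 2 ∧ (n0 : ℕ) = 3 ∧ (n1 : ℕ) = 3 ∧ (n2 : ℕ) = 0 ∧ (n3 : ℕ) = 1) ∨
    ((nF : ℕ) = 2 ∧ (n0 : ℕ) = 3 ∧ (n1 : ℕ) = 4 ∧ (n2 : ℕ) = 0 ∧ (n3 : ℕ) = 1) ∨
    ((nF : ℕ) = 2 ∧ (n0 : ℕ) = 3 ∧ (n1 : ℕ) = 4 ∧ (n2 : ℕ) = 1 ∧ (n3 : ℕ) = 0) ∨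
    ((nF : ℕ) = 2 ∧ (n0 : ℕ) = 3 ∧ (n1 : ℕ) = 4 ∧ (n2 : ℕ) = 1 ∧ (n3 : ℕ) = 1) ∨
    ((nF : ℕ) = 2 ∧ (n0 : ℕ) = 4 ∧ (n1 : ℕ) = 3 ∧ (n2 : ℕ) = 0 ∧ (n3 : ℕ) = 1) := by
  decide

lemma mk_okpair {x1 x2 y1 y2 aa ba ab bb ac bc : ℝ} {i j ma mb mc : ℕ}
    (hx : x1 ≠ x2) (hij : i < j)
    (u1a : i < ma → y1 - ba = -(x1 - aa) ^ 2) (u2a : j < ma → y2 - ba = -(x2 - aa) ^ 2)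
    (d1a : ¬i < ma → y1 - ba = (x1 - aa) ^ 2) (d2a : ¬j < ma → y2 - ba = (x2 - aa) ^ 2)
    (u1b : i < mb → y1 - bb = -(x1 - ab) ^ 2) (u2b : j < mb → y2 - bb = -(x2 - ab) ^ 2)
    (d1b : ¬i < mb → y1 - bb = (x1 - ab) ^ 2) (d2b : ¬j < mb → y2 - bb = (x2 - ab) ^ 2)
    (u1c : i < mc → y1 - bc = -(x1 - ac) ^ 2) (u2c : j < mc → y2 - bc = -(x2 - ac) ^ 2)
    (d1c : ¬i < mc → y1 - bc = (x1 - ac) ^ 2) (d2c : ¬j < mc → y2 - bc = (x2 - ac) ^ 2)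
    (dab : ¬(aa = ab ∧ ba = bb)) (dac : ¬(aa = ac ∧ ba = bc)) (dbc : ¬(ab = ac ∧ bb = bc)) :
    OkPair i j ma mb mc := by
  refine ⟨?_, ?_, ?_, ?_, ?_, ?_, ?_⟩
  · rintro ⟨hju, hjv⟩
    exact two_up hx (u1a (hij.trans hju)) (u2a hju) (u1b (hij.trans hjv)) (u2b hjv) dab
  · rintro ⟨hju, hjv⟩
    exact two_up hx (u1a (hij.trans hju)) (u2a hju) (u1c (hij.trans hjv)) (u2c hjv) dac
  · rintro ⟨hju, hjv⟩
    exact two_up hx (u1b (hij.trans hju)) (u2b hju) (u1c (hij.trans hjv)) (u2c hjv) dbc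
  · rintro ⟨hiu, hiv⟩
    exact two_dn hx (d1a (by omega)) (d2a (by omega)) (d1b (by omega)) (d2b (by omega)) dab
  · rintro ⟨hiu, hiv⟩
    exact two_dn hx (d1a (by omega)) (d2a (by omega)) (d1c (by omega)) (d2c (by omega)) dac
  · rintro ⟨hiu, hiv⟩
    exact two_dn hx (d1b (by omega)) (d2b (by omega)) (d1c (by omega)) (d2c (by omega)) dbc
  · rintro ⟨⟨hia, hja⟩, ⟨hib, hjb⟩, ⟨hic, hjc⟩⟩
    exact three_mix dab dac dbc (u1a hia) (d2a (by omega)) (u1b hib) (d2b (by omega))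
      (u1c hic) (d2c (by omega))

lemma threshold {y0 y1 y2 y3 : ℝ} (h01 : y0 < y1) (h12 : y1 < y2) (h23 : y2 < y3)
    (b : ℝ) :
    ∃ n : ℕ, n < 5 ∧ (y0 ≤ b ↔ 0 < n) ∧ (y1 ≤ b ↔ 1 < n) ∧ (y2 ≤ b ↔ 2 < n) ∧
      (y3 ≤ b ↔ 3 < n) := by
  by_cases h3 : y3 ≤ b
  · exact ⟨4, by norm_num, iff_of_true (by linarith) (by norm_num),
      iff_of_true (by linarith) (by norm_num), iff_of_true (by linarith) (by norm_num),
      iff_of_true h3 (by norm_num)⟩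
  · by_cases h2 : y2 ≤ b
    · exact ⟨3, by norm_num, iff_of_true (by linarith) (by norm_num),
        iff_of_true (by linarith) (by norm_num), iff_of_true h2 (by norm_num),
        iff_of_false h3 (by norm_num)⟩
    · by_cases h1 : y1 ≤ b
      · exact ⟨2, by norm_num, iff_of_true (by linarith) (by norm_num),
          iff_of_true h1 (by norm_num), iff_of_false h2 (by norm_num),
          iff_of_false h3 (by norm_num)⟩
      · by_cases h0 : y0 ≤ b
        · exact ⟨1, by norm_num, iff_of_true h0 (by norm_num),
            iff_of_false h1 (by norm_num), iff_of_false h2 (by norm_num),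
            iff_of_false h3 (by norm_num)⟩
        · exact ⟨0, by norm_num, iff_of_false h0 (by norm_num),
            iff_of_false h1 (by norm_num), iff_of_false h2 (by norm_num),
            iff_of_false h3 (by norm_num)⟩
lemma same_col (X Y : Fin 4 → ℝ) (i j : Fin 4) (hij : i ≠ j) (hxe : X i = X j)
    (hyne : Y i ≠ Y j)
    (h : ∀ I : Set (Fin 4), ∃ a b : ℝ,
      ∀ t : Fin 4, (Y t - b = (X t - a) ^ 2 ∨ Y t - b = -(X t - a) ^ 2) ↔ t ∈ I) :
    False := by
  obtain ⟨k, l, hkl, hki, hkj, hli, hlj⟩ :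
      ∃ k l : Fin 4, k ≠ l ∧ k ≠ i ∧ k ≠ j ∧ l ≠ i ∧ l ≠ j := by
    have H : ∀ i j : Fin 4, i ≠ j → ∃ k l : Fin 4, k ≠ l ∧ k ≠ i ∧ k ≠ j ∧ l ≠ i ∧ l ≠ j := by
      decide
    exact H i j hij
  obtain ⟨a1, b1, h1⟩ := h Set.univ
  obtain ⟨a2, b2, h2⟩ := h {k}ᶜ
  obtain ⟨a3, b3, h3⟩ := h {l}ᶜ
  have c1i := (h1 i).2 (Set.mem_univ i)
  have c1j := (h1 j).2 (Set.mem_univ j)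
  have c1k := (h1 k).2 (Set.mem_univ k)
  have c1l := (h1 l).2 (Set.mem_univ l)
  have c2i := (h2 i).2 (Set.mem_compl_singleton_iff.2 hki.symm)
  have c2j := (h2 j).2 (Set.mem_compl_singleton_iff.2 hkj.symm)
  have c2l := (h2 l).2 (Set.mem_compl_singleton_iff.2 hkl.symm)
  have c3i := (h3 i).2 (Set.mem_compl_singleton_iff.2 hli.symm)
  have c3j := (h3 j).2 (Set.mem_compl_singleton_iff.2 hlj.symm)
  have n2k : ¬(Y k - b2 = (X k - a2) ^ 2 ∨ Y k - b2 = -(X k - a2) ^ 2) :=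
    fun hc => (Set.mem_compl_singleton_iff.1 ((h2 k).1 hc)) rfl
  have n3l : ¬(Y l - b3 = (X l - a3) ^ 2 ∨ Y l - b3 = -(X l - a3) ^ 2) :=
    fun hc => (Set.mem_compl_singleton_iff.1 ((h3 l).1 hc)) rfl
  have d12 : ¬(a1 = a2 ∧ b1 = b2) := by
    rintro ⟨e1, e2⟩; rw [e1, e2] at c1k; exact n2k c1k
  have d13 : ¬(a1 = a3 ∧ b1 = b3) := by
    rintro ⟨e1, e2⟩; rw [e1, e2] at c1l; exact n3l c1l
  have d23 : ¬(a2 = a3 ∧ b2 = b3) := by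
    rintro ⟨e1, e2⟩; rw [e1, e2] at c2l; exact n3l c2l
  have key : ∀ a b : ℝ,
      (Y i - b = (X i - a) ^ 2 ∨ Y i - b = -(X i - a) ^ 2) →
      (Y j - b = (X j - a) ^ 2 ∨ Y j - b = -(X j - a) ^ 2) →
      2 * b = Y i + Y j ∧
        ((X i - a) ^ 2 = (Y i - Y j) / 2 ∨ (X i - a) ^ 2 = (Y j - Y i) / 2) := by
    intro a b ci cj
    rw [← hxe] at cj
    rcases ci with ci | ci <;> rcases cj with cj | cj
    · exact absurd (by linarith : Y i = Y j) hyne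
    · exact ⟨by linarith, Or.inl (by linarith)⟩
    · exact ⟨by linarith, Or.inr (by linarith)⟩
    · exact absurd (by linarith : Y i = Y j) hyne
  obtain ⟨e1, f1⟩ := key a1 b1 c1i c1j
  obtain ⟨e2, f2⟩ := key a2 b2 c2i c2j
  obtain ⟨e3, f3⟩ := key a3 b3 c3i c3j
  have pair : ∀ a b a' b' : ℝ, 2 * b = Y i + Y j → 2 * b' = Y i + Y j →
      ((X i - a) ^ 2 = (Y i - Y j) / 2 ∨ (X i - a) ^ 2 = (Y j - Y i) / 2) →
      ((X i - a') ^ 2 = (Y i - Y j) / 2 ∨ (X i - a') ^ 2 = (Y j - Y i) / 2) →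
      ¬(a = a' ∧ b = b') → a + a' = 2 * X i := by
    intro a b a' b' eb eb' fa fa' hne
    have hbb : b = b' := by linarith
    rcases fa with fa | fa <;> rcases fa' with fa' | fa'
    · have k0 : (a - a') * (a + a' - 2 * X i) = 0 := by
        first
          | linear_combination fa - fa'
          | linear_combination fa' - fa
      rcases mul_eq_zero.1 k0 with hk | hk
      · exact absurd ⟨by linarith, hbb⟩ hne
      · linarith
    · exact absurd (by linarith [sq_nonneg (X i - a), sq_nonneg (X i - a')] : Y i = Y j) hyne
    · exact absurd (by linarith [sq_nonneg (X i - a), sq_nonneg (X i - a')] : Y i = Y j) hyne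
    · have k0 : (a - a') * (a + a' - 2 * X i) = 0 := by
        first
          | linear_combination fa - fa'
          | linear_combination fa' - fa
      rcases mul_eq_zero.1 k0 with hk | hk
      · exact absurd ⟨by linarith, hbb⟩ hne
      · linarith
  have p12 := pair a1 b1 a2 b2 e1 e2 f1 f2 d12
  have p13 := pair a1 b1 a3 b3 e1 e3 f1 f3 d13
  have p23 := pair a2 b2 a3 b3 e2 e3 f2 f3 d23
  exact d23 ⟨by linarith, by linarith⟩

lemma same_row (X Y : Fin 4 → ℝ) (i j : Fin 4) (hij : i ≠ j) (hxne : X i ≠ X j)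
    (hye : Y i = Y j)
    (h : ∀ I : Set (Fin 4), ∃ a b : ℝ,
      ∀ t : Fin 4, (Y t - b = (X t - a) ^ 2 ∨ Y t - b = -(X t - a) ^ 2) ↔ t ∈ I) :
    False := by
  obtain ⟨k, l, hkl, hki, hkj, hli, hlj⟩ :
      ∃ k l : Fin 4, k ≠ l ∧ k ≠ i ∧ k ≠ j ∧ l ≠ i ∧ l ≠ j := by
    have H : ∀ i j : Fin 4, i ≠ j → ∃ k l : Fin 4, k ≠ l ∧ k ≠ i ∧ k ≠ j ∧ l ≠ i ∧ l ≠ j := by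
      decide
    exact H i j hij
  obtain ⟨a1, b1, h1⟩ := h Set.univ
  obtain ⟨a2, b2, h2⟩ := h {k}ᶜ
  obtain ⟨a3, b3, h3⟩ := h {l}ᶜ
  have c1i := (h1 i).2 (Set.mem_univ i)
  have c1j := (h1 j).2 (Set.mem_univ j)
  have c1k := (h1 k).2 (Set.mem_univ k)
  have c1l := (h1 l).2 (Set.mem_univ l)
  have c2i := (h2 i).2 (Set.mem_compl_singleton_iff.2 hki.symm)
  have c2j := (h2 j).2 (Set.mem_compl_singleton_iff.2 hkj.symm)
  have c2l := (h2 l).2 (Set.mem_compl_singleton_iff.2 hkl.symm)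
  have c3i := (h3 i).2 (Set.mem_compl_singleton_iff.2 hli.symm)
  have c3j := (h3 j).2 (Set.mem_compl_singleton_iff.2 hlj.symm)
  have n2k : ¬(Y k - b2 = (X k - a2) ^ 2 ∨ Y k - b2 = -(X k - a2) ^ 2) :=
    fun hc => (Set.mem_compl_singleton_iff.1 ((h2 k).1 hc)) rfl
  have n3l : ¬(Y l - b3 = (X l - a3) ^ 2 ∨ Y l - b3 = -(X l - a3) ^ 2) :=
    fun hc => (Set.mem_compl_singleton_iff.1 ((h3 l).1 hc)) rfl
  have d12 : ¬(a1 = a2 ∧ b1 = b2) := by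
    rintro ⟨e1, e2⟩; rw [e1, e2] at c1k; exact n2k c1k
  have d13 : ¬(a1 = a3 ∧ b1 = b3) := by
    rintro ⟨e1, e2⟩; rw [e1, e2] at c1l; exact n3l c1l
  have d23 : ¬(a2 = a3 ∧ b2 = b3) := by
    rintro ⟨e1, e2⟩; rw [e1, e2] at c2l; exact n3l c2l
  have key : ∀ a b : ℝ,
      (Y i - b = (X i - a) ^ 2 ∨ Y i - b = -(X i - a) ^ 2) →
      (Y j - b = (X j - a) ^ 2 ∨ Y j - b = -(X j - a) ^ 2) →
      2 * a = X i + X j ∧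
        (Y i - b = (X i - a) ^ 2 ∨ Y i - b = -(X i - a) ^ 2) := by
    intro a b ci cj
    rw [← hye] at cj
    rcases ci with ci | ci <;> rcases cj with cj | cj
    · have k0 : (X i - X j) * (X i + X j - 2 * a) = 0 := by first
        | linear_combination ci - cj
        | linear_combination cj - ci
      rcases mul_eq_zero.1 k0 with hk | hk
      · exact absurd (by linarith : X i = X j) hxne
      · exact ⟨by linarith, Or.inl ci⟩
    · have hs1 : (X i - a) ^ 2 = 0 :=
        le_antisymm (by nlinarith [sq_nonneg (X j - a)]) (sq_nonneg _)
      have hs2 : (X j - a) ^ 2 = 0 :=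
        le_antisymm (by nlinarith [sq_nonneg (X i - a)]) (sq_nonneg _)
      have e1 : X i = a := sub_eq_zero.1 (sq_eq_zero_iff.1 hs1)
      have e2 : X j = a := sub_eq_zero.1 (sq_eq_zero_iff.1 hs2)
      exact absurd (e1.trans e2.symm) hxne
    · have hs1 : (X i - a) ^ 2 = 0 :=
        le_antisymm (by nlinarith [sq_nonneg (X j - a)]) (sq_nonneg _)
      have hs2 : (X j - a) ^ 2 = 0 :=
        le_antisymm (by nlinarith [sq_nonneg (X i - a)]) (sq_nonneg _)
      have e1 : X i = a := sub_eq_zero.1 (sq_eq_zero_iff.1 hs1)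
      have e2 : X j = a := sub_eq_zero.1 (sq_eq_zero_iff.1 hs2)
      exact absurd (e1.trans e2.symm) hxne
    · have k0 : (X i - X j) * (X i + X j - 2 * a) = 0 := by first
        | linear_combination ci - cj
        | linear_combination cj - ci
      rcases mul_eq_zero.1 k0 with hk | hk
      · exact absurd (by linarith : X i = X j) hxne
      · exact ⟨by linarith, Or.inr ci⟩
  obtain ⟨g1, f1⟩ := key a1 b1 c1i c1j
  obtain ⟨g2, f2⟩ := key a2 b2 c2i c2j
  obtain ⟨g3, f3⟩ := key a3 b3 c3i c3j
  have ea12 : a1 = a2 := by linarith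
  have ea13 : a1 = a3 := by linarith
  rw [← ea12] at f2
  rw [← ea13] at f3
  rcases f1 with f1 | f1 <;> rcases f2 with f2 | f2 <;> rcases f3 with f3 | f3
  · exact d12 ⟨ea12, by linarith⟩
  · exact d12 ⟨ea12, by linarith⟩
  · exact d13 ⟨ea13, by linarith⟩
  · exact d23 ⟨ea12.symm.trans ea13, by linarith⟩
  · exact d23 ⟨ea12.symm.trans ea13, by linarith⟩
  · exact d13 ⟨ea13, by linarith⟩
  · exact d12 ⟨ea12, by linarith⟩
  · exact d12 ⟨ea12, by linarith⟩
set_option maxHeartbeats 1000000 in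
lemma master (X Y : Fin 4 → ℝ) (hX : Function.Injective X) (hY : StrictMono Y)
    (h : ∀ I : Set (Fin 4), ∃ a b : ℝ,
      ∀ t : Fin 4, (Y t - b = (X t - a) ^ 2 ∨ Y t - b = -(X t - a) ^ 2) ↔ t ∈ I) :
    False := by
  obtain ⟨aF, bF, hF⟩ := h Set.univ
  obtain ⟨aA, bA, hA⟩ := h {0}ᶜ
  obtain ⟨aB, bB, hB⟩ := h {1}ᶜ
  obtain ⟨aC, bC, hC⟩ := h {2}ᶜ
  obtain ⟨aD, bD, hD⟩ := h {3}ᶜ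
  have cF : ∀ t, Y t - bF = (X t - aF) ^ 2 ∨ Y t - bF = -(X t - aF) ^ 2 :=
    fun t => (hF t).2 (Set.mem_univ t)
  have cA : ∀ t, t ≠ 0 → (Y t - bA = (X t - aA) ^ 2 ∨ Y t - bA = -(X t - aA) ^ 2) :=
    fun t ht => (hA t).2 (Set.mem_compl_singleton_iff.2 ht)
  have cB : ∀ t, t ≠ 1 → (Y t - bB = (X t - aB) ^ 2 ∨ Y t - bB = -(X t - aB) ^ 2) :=
    fun t ht => (hB t).2 (Set.mem_compl_singleton_iff.2 ht)
  have cC : ∀ t, t ≠ 2 → (Y t - bC = (X t - aC) ^ 2 ∨ Y t - bC = -(X t - aC) ^ 2) :=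
    fun t ht => (hC t).2 (Set.mem_compl_singleton_iff.2 ht)
  have cD : ∀ t, t ≠ 3 → (Y t - bD = (X t - aD) ^ 2 ∨ Y t - bD = -(X t - aD) ^ 2) :=
    fun t ht => (hD t).2 (Set.mem_compl_singleton_iff.2 ht)
  have ncA : ¬(Y 0 - bA = (X 0 - aA) ^ 2 ∨ Y 0 - bA = -(X 0 - aA) ^ 2) :=
    fun hc => (Set.mem_compl_singleton_iff.1 ((hA 0).1 hc)) rfl
  have ncB : ¬(Y 1 - bB = (X 1 - aB) ^ 2 ∨ Y 1 - bB = -(X 1 - aB) ^ 2) :=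
    fun hc => (Set.mem_compl_singleton_iff.1 ((hB 1).1 hc)) rfl
  have ncC : ¬(Y 2 - bC = (X 2 - aC) ^ 2 ∨ Y 2 - bC = -(X 2 - aC) ^ 2) :=
    fun hc => (Set.mem_compl_singleton_iff.1 ((hC 2).1 hc)) rfl
  have ncD : ¬(Y 3 - bD = (X 3 - aD) ^ 2 ∨ Y 3 - bD = -(X 3 - aD) ^ 2) :=
    fun hc => (Set.mem_compl_singleton_iff.1 ((hD 3).1 hc)) rfl
  have dFA : ¬(aF = aA ∧ bF = bA) := by
    rintro ⟨e1, e2⟩; rw [e1, e2] at cF; exact ncA (cF 0)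
  have dFB : ¬(aF = aB ∧ bF = bB) := by
    rintro ⟨e1, e2⟩; rw [e1, e2] at cF; exact ncB (cF 1)
  have dFC : ¬(aF = aC ∧ bF = bC) := by
    rintro ⟨e1, e2⟩; rw [e1, e2] at cF; exact ncC (cF 2)
  have dFD : ¬(aF = aD ∧ bF = bD) := by
    rintro ⟨e1, e2⟩; rw [e1, e2] at cF; exact ncD (cF 3)
  have dAB : ¬(aA = aB ∧ bA = bB) := by
    rintro ⟨e1, e2⟩; rw [e1, e2] at cA; exact ncB (cA 1 (by decide))
  have dAC : ¬(aA = aC ∧ bA = bC) := by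
    rintro ⟨e1, e2⟩; rw [e1, e2] at cA; exact ncC (cA 2 (by decide))
  have dAD : ¬(aA = aD ∧ bA = bD) := by
    rintro ⟨e1, e2⟩; rw [e1, e2] at cA; exact ncD (cA 3 (by decide))
  have dBC : ¬(aB = aC ∧ bB = bC) := by
    rintro ⟨e1, e2⟩; rw [e1, e2] at cB; exact ncC (cB 2 (by decide))
  have dBD : ¬(aB = aD ∧ bB = bD) := by
    rintro ⟨e1, e2⟩; rw [e1, e2] at cB; exact ncD (cB 3 (by decide))
  have dCD : ¬(aC = aD ∧ bC = bD) := by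
    rintro ⟨e1, e2⟩; rw [e1, e2] at cC; exact ncD (cC 3 (by decide))
  have o01 : Y 0 < Y 1 := hY (by decide)
  have o12 : Y 1 < Y 2 := hY (by decide)
  have o23 : Y 2 < Y 3 := hY (by decide)
  obtain ⟨mF, hmF, tF0, tF1, tF2, tF3⟩ := threshold o01 o12 o23 bF
  obtain ⟨mA, hmA, tA0, tA1, tA2, tA3⟩ := threshold o01 o12 o23 bA
  obtain ⟨mB, hmB, tB0, tB1, tB2, tB3⟩ := threshold o01 o12 o23 bB
  obtain ⟨mC, hmC, tC0, tC1, tC2, tC3⟩ := threshold o01 o12 o23 bC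
  obtain ⟨mD, hmD, tD0, tD1, tD2, tD3⟩ := threshold o01 o12 o23 bD
  have uF0 : 0 < mF → Y 0 - bF = -(X 0 - aF) ^ 2 := fun hm => up_of_le (cF 0) (tF0.2 hm)
  have uF1 : 1 < mF → Y 1 - bF = -(X 1 - aF) ^ 2 := fun hm => up_of_le (cF 1) (tF1.2 hm)
  have uF2 : 2 < mF → Y 2 - bF = -(X 2 - aF) ^ 2 := fun hm => up_of_le (cF 2) (tF2.2 hm)
  have uF3 : 3 < mF → Y 3 - bF = -(X 3 - aF) ^ 2 := fun hm => up_of_le (cF 3) (tF3.2 hm)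
  have dF0 : ¬0 < mF → Y 0 - bF = (X 0 - aF) ^ 2 :=
    fun hm => dn_of_lt (cF 0) (not_le.1 fun hle => hm (tF0.1 hle))
  have dF1 : ¬1 < mF → Y 1 - bF = (X 1 - aF) ^ 2 :=
    fun hm => dn_of_lt (cF 1) (not_le.1 fun hle => hm (tF1.1 hle))
  have dF2 : ¬2 < mF → Y 2 - bF = (X 2 - aF) ^ 2 :=
    fun hm => dn_of_lt (cF 2) (not_le.1 fun hle => hm (tF2.1 hle))
  have dF3 : ¬3 < mF → Y 3 - bF = (X 3 - aF) ^ 2 :=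
    fun hm => dn_of_lt (cF 3) (not_le.1 fun hle => hm (tF3.1 hle))
  have uA1 : 1 < mA → Y 1 - bA = -(X 1 - aA) ^ 2 :=
    fun hm => up_of_le (cA 1 (by decide)) (tA1.2 hm)
  have uA2 : 2 < mA → Y 2 - bA = -(X 2 - aA) ^ 2 :=
    fun hm => up_of_le (cA 2 (by decide)) (tA2.2 hm)
  have uA3 : 3 < mA → Y 3 - bA = -(X 3 - aA) ^ 2 :=
    fun hm => up_of_le (cA 3 (by decide)) (tA3.2 hm)
  have dA1 : ¬1 < mA → Y 1 - bA = (X 1 - aA) ^ 2 :=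
    fun hm => dn_of_lt (cA 1 (by decide)) (not_le.1 fun hle => hm (tA1.1 hle))
  have dA2 : ¬2 < mA → Y 2 - bA = (X 2 - aA) ^ 2 :=
    fun hm => dn_of_lt (cA 2 (by decide)) (not_le.1 fun hle => hm (tA2.1 hle))
  have dA3 : ¬3 < mA → Y 3 - bA = (X 3 - aA) ^ 2 :=
    fun hm => dn_of_lt (cA 3 (by decide)) (not_le.1 fun hle => hm (tA3.1 hle))
  have uB0 : 0 < mB → Y 0 - bB = -(X 0 - aB) ^ 2 :=
    fun hm => up_of_le (cB 0 (by decide)) (tB0.2 hm)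
  have uB2 : 2 < mB → Y 2 - bB = -(X 2 - aB) ^ 2 :=
    fun hm => up_of_le (cB 2 (by decide)) (tB2.2 hm)
  have uB3 : 3 < mB → Y 3 - bB = -(X 3 - aB) ^ 2 :=
    fun hm => up_of_le (cB 3 (by decide)) (tB3.2 hm)
  have dB0 : ¬0 < mB → Y 0 - bB = (X 0 - aB) ^ 2 :=
    fun hm => dn_of_lt (cB 0 (by decide)) (not_le.1 fun hle => hm (tB0.1 hle))
  have dB2 : ¬2 < mB → Y 2 - bB = (X 2 - aB) ^ 2 :=
    fun hm => dn_of_lt (cB 2 (by decide)) (not_le.1 fun hle => hm (tB2.1 hle))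
  have dB3 : ¬3 < mB → Y 3 - bB = (X 3 - aB) ^ 2 :=
    fun hm => dn_of_lt (cB 3 (by decide)) (not_le.1 fun hle => hm (tB3.1 hle))
  have uC0 : 0 < mC → Y 0 - bC = -(X 0 - aC) ^ 2 :=
    fun hm => up_of_le (cC 0 (by decide)) (tC0.2 hm)
  have uC1 : 1 < mC → Y 1 - bC = -(X 1 - aC) ^ 2 :=
    fun hm => up_of_le (cC 1 (by decide)) (tC1.2 hm)
  have uC3 : 3 < mC → Y 3 - bC = -(X 3 - aC) ^ 2 :=
    fun hm => up_of_le (cC 3 (by decide)) (tC3.2 hm)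
  have dC0 : ¬0 < mC → Y 0 - bC = (X 0 - aC) ^ 2 :=
    fun hm => dn_of_lt (cC 0 (by decide)) (not_le.1 fun hle => hm (tC0.1 hle))
  have dC1 : ¬1 < mC → Y 1 - bC = (X 1 - aC) ^ 2 :=
    fun hm => dn_of_lt (cC 1 (by decide)) (not_le.1 fun hle => hm (tC1.1 hle))
  have dC3 : ¬3 < mC → Y 3 - bC = (X 3 - aC) ^ 2 :=
    fun hm => dn_of_lt (cC 3 (by decide)) (not_le.1 fun hle => hm (tC3.1 hle))
  have uD0 : 0 < mD → Y 0 - bD = -(X 0 - aD) ^ 2 :=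
    fun hm => up_of_le (cD 0 (by decide)) (tD0.2 hm)
  have uD1 : 1 < mD → Y 1 - bD = -(X 1 - aD) ^ 2 :=
    fun hm => up_of_le (cD 1 (by decide)) (tD1.2 hm)
  have uD2 : 2 < mD → Y 2 - bD = -(X 2 - aD) ^ 2 :=
    fun hm => up_of_le (cD 2 (by decide)) (tD2.2 hm)
  have dD0 : ¬0 < mD → Y 0 - bD = (X 0 - aD) ^ 2 :=
    fun hm => dn_of_lt (cD 0 (by decide)) (not_le.1 fun hle => hm (tD0.1 hle))
  have dD1 : ¬1 < mD → Y 1 - bD = (X 1 - aD) ^ 2 :=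
    fun hm => dn_of_lt (cD 1 (by decide)) (not_le.1 fun hle => hm (tD1.1 hle))
  have dD2 : ¬2 < mD → Y 2 - bD = (X 2 - aD) ^ 2 :=
    fun hm => dn_of_lt (cD 2 (by decide)) (not_le.1 fun hle => hm (tD2.1 hle))
  have P01 : OkPair 0 1 mF mC mD :=
    mk_okpair (hX.ne (show (0 : Fin 4) ≠ 1 by decide)) (by norm_num)
      uF0 uF1 dF0 dF1 uC0 uC1 dC0 dC1 uD0 uD1 dD0 dD1 dFC dFD dCD
  have P02 : OkPair 0 2 mF mB mD :=
    mk_okpair (hX.ne (show (0 : Fin 4) ≠ 2 by decide)) (by norm_num)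
      uF0 uF2 dF0 dF2 uB0 uB2 dB0 dB2 uD0 uD2 dD0 dD2 dFB dFD dBD
  have P03 : OkPair 0 3 mF mB mC :=
    mk_okpair (hX.ne (show (0 : Fin 4) ≠ 3 by decide)) (by norm_num)
      uF0 uF3 dF0 dF3 uB0 uB3 dB0 dB3 uC0 uC3 dC0 dC3 dFB dFC dBC
  have P12 : OkPair 1 2 mF mA mD :=
    mk_okpair (hX.ne (show (1 : Fin 4) ≠ 2 by decide)) (by norm_num)
      uF1 uF2 dF1 dF2 uA1 uA2 dA1 dA2 uD1 uD2 dD1 dD2 dFA dFD dAD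
  have P13 : OkPair 1 3 mF mA mC :=
    mk_okpair (hX.ne (show (1 : Fin 4) ≠ 3 by decide)) (by norm_num)
      uF1 uF3 dF1 dF3 uA1 uA3 dA1 dA3 uC1 uC3 dC1 dC3 dFA dFC dAC
  have P23 : OkPair 2 3 mF mA mB :=
    mk_okpair (hX.ne (show (2 : Fin 4) ≠ 3 by decide)) (by norm_num)
      uF2 uF3 dF2 dF3 uA2 uA3 dA2 dA3 uB2 uB3 dB2 dB3 dFA dFB dAB
  have hscen := scen ⟨mF, hmF⟩ ⟨mA, hmA⟩ ⟨mB, hmB⟩ ⟨mC, hmC⟩ ⟨mD, hmD⟩ P01 P02 P03 P12 P13 P23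
  rcases hscen with ⟨e1, e2, e3, e4, e5⟩ | ⟨e1, e2, e3, e4, e5⟩ | ⟨e1, e2, e3, e4, e5⟩ |
    ⟨e1, e2, e3, e4, e5⟩ | ⟨e1, e2, e3, e4, e5⟩ <;>
      (replace e1 : mF = 2 := e1) <;> subst e1
  -- Scenario S1 : mA = 3, mB = 3, mC = 0, mD = 1
  · replace e2 : mA = 3 := e2; replace e3 : mB = 3 := e3
    replace e4 : mC = 0 := e4; replace e5 : mD = 1 := e5
    subst e2; subst e3; subst e4; subst e5
    have sA : aA + aD = X 1 + X 2 :=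
      sumud (hX.ne (show (1 : Fin 4) ≠ 2 by decide)) (uA1 (by norm_num)) (uA2 (by norm_num))
        (dD1 (by norm_num)) (dD2 (by norm_num))
    have v02 : aF + aD = X 0 + X 2 :=
      vieta dFD (uF0 (by norm_num)) (dF2 (by norm_num)) (uD0 (by norm_num)) (dD2 (by norm_num))
    have v03 : aF + aB = X 0 + X 3 :=
      vieta dFB (uF0 (by norm_num)) (dF3 (by norm_num)) (uB0 (by norm_num)) (dB3 (by norm_num))
    have v23 : aA + aB = X 2 + X 3 :=
      vieta dAB (uA2 (by norm_num)) (dA3 (by norm_num)) (uB2 (by norm_num)) (dB3 (by norm_num))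
    have v13 : aF + aA = X 1 + X 3 :=
      vieta dFA (uF1 (by norm_num)) (dF3 (by norm_num)) (uA1 (by norm_num)) (dA3 (by norm_num))
    exact hX.ne (show (1 : Fin 4) ≠ 2 by decide) (by linarith)
  -- Scenario S2 : mA = 3, mB = 4, mC = 0, mD = 1
  · replace e2 : mA = 3 := e2; replace e3 : mB = 4 := e3
    replace e4 : mC = 0 := e4; replace e5 : mD = 1 := e5
    subst e2; subst e3; subst e4; subst e5
    have hU1 : Y 0 - Y 1 = (X 1 - X 0) * (X 0 + X 1 - 2 * aF) := by
      first
        | linear_combination (uF0 (by norm_num)) - (uF1 (by norm_num))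
        | linear_combination -((uF0 (by norm_num)) - (uF1 (by norm_num)))
    have hU2 : Y 1 - Y 2 = (X 2 - X 1) * (X 1 + X 2 - 2 * aA) := by
      first
        | linear_combination (uA1 (by norm_num)) - (uA2 (by norm_num))
        | linear_combination -((uA1 (by norm_num)) - (uA2 (by norm_num)))
    have hU3 : Y 0 - Y 2 = (X 2 - X 0) * (X 0 + X 2 - 2 * aB) := by
      first
        | linear_combination (uB0 (by norm_num)) - (uB2 (by norm_num))
        | linear_combination -((uB0 (by norm_num)) - (uB2 (by norm_num)))
    have sA2 : aB + aF = X 2 + X 3 :=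
      sumud (hX.ne (show (2 : Fin 4) ≠ 3 by decide)) (uB2 (by norm_num)) (uB3 (by norm_num))
        (dF2 (by norm_num)) (dF3 (by norm_num))
    have sB2 : aA + aD = X 1 + X 2 :=
      sumud (hX.ne (show (1 : Fin 4) ≠ 2 by decide)) (uA1 (by norm_num)) (uA2 (by norm_num))
        (dD1 (by norm_num)) (dD2 (by norm_num))
    have vC2 : aF + aD = X 0 + X 2 :=
      vieta dFD (uF0 (by norm_num)) (dF2 (by norm_num)) (uD0 (by norm_num)) (dD2 (by norm_num))
    have vD2 : aF + aA = X 1 + X 3 :=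
      vieta dFA (uF1 (by norm_num)) (dF3 (by norm_num)) (uA1 (by norm_num)) (dA3 (by norm_num))
    have q : (X 0 - X 1) ^ 2 + (X 0 - X 2) ^ 2 + (X 1 - X 2) ^ 2 = 0 := by
      linear_combination (-1 : ℝ) * hU1 + (-1 : ℝ) * hU2 + hU3 + (2 * (X 0 - X 2)) * sA2 +
        (2 * (X 0 - X 1)) * sB2 + (2 * (X 1 - X 0)) * vC2 + (2 * (X 2 - X 0)) * vD2
    have h01 : (X 0 - X 1) ^ 2 = 0 :=
      le_antisymm (by nlinarith [sq_nonneg (X 0 - X 2), sq_nonneg (X 1 - X 2)]) (sq_nonneg _)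
    exact hX.ne (show (0 : Fin 4) ≠ 1 by decide) (sub_eq_zero.1 (sq_eq_zero_iff.1 h01))
  -- Scenario S3 : mA = 3, mB = 4, mC = 1, mD = 0
  · replace e2 : mA = 3 := e2; replace e3 : mB = 4 := e3
    replace e4 : mC = 1 := e4; replace e5 : mD = 0 := e5
    subst e2; subst e3; subst e4; subst e5
    have A3 : aF + aD = X 0 + X 1 :=
      sumud (hX.ne (show (0 : Fin 4) ≠ 1 by decide)) (uF0 (by norm_num)) (uF1 (by norm_num))
        (dD0 (by norm_num)) (dD1 (by norm_num))
    have B3 : aA + aD = X 1 + X 2 :=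
      sumud (hX.ne (show (1 : Fin 4) ≠ 2 by decide)) (uA1 (by norm_num)) (uA2 (by norm_num))
        (dD1 (by norm_num)) (dD2 (by norm_num))
    have C3 : aF + aA = X 1 + X 3 :=
      vieta dFA (uF1 (by norm_num)) (dF3 (by norm_num)) (uA1 (by norm_num)) (dA3 (by norm_num))
    have D3 : aB + aF = X 2 + X 3 :=
      sumud (hX.ne (show (2 : Fin 4) ≠ 3 by decide)) (uB2 (by norm_num)) (uB3 (by norm_num))
        (dF2 (by norm_num)) (dF3 (by norm_num))
    have E3 : aB + aD = X 0 + X 2 :=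
      sumud (hX.ne (show (0 : Fin 4) ≠ 2 by decide)) (uB0 (by norm_num)) (uB2 (by norm_num))
        (dD0 (by norm_num)) (dD2 (by norm_num))
    exact hX.ne (show (0 : Fin 4) ≠ 2 by decide) (by linarith)
  -- Scenario S4 : mA = 3, mB = 4, mC = 1, mD = 1
  · replace e2 : mA = 3 := e2; replace e3 : mB = 4 := e3
    replace e4 : mC = 1 := e4; replace e5 : mD = 1 := e5
    subst e2; subst e3; subst e4; subst e5
    have v01 : aC + aD = X 0 + X 1 :=
      vieta dCD (uC0 (by norm_num)) (dC1 (by norm_num)) (uD0 (by norm_num)) (dD1 (by norm_num))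
    have v02 : aF + aD = X 0 + X 2 :=
      vieta dFD (uF0 (by norm_num)) (dF2 (by norm_num)) (uD0 (by norm_num)) (dD2 (by norm_num))
    have v03 : aF + aC = X 0 + X 3 :=
      vieta dFC (uF0 (by norm_num)) (dF3 (by norm_num)) (uC0 (by norm_num)) (dC3 (by norm_num))
    have v13 : aF + aA = X 1 + X 3 :=
      vieta dFA (uF1 (by norm_num)) (dF3 (by norm_num)) (uA1 (by norm_num)) (dA3 (by norm_num))
    have P4 : aA + aD = X 1 + X 2 :=
      sumud (hX.ne (show (1 : Fin 4) ≠ 2 by decide)) (uA1 (by norm_num)) (uA2 (by norm_num))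
        (dD1 (by norm_num)) (dD2 (by norm_num))
    exact hX.ne (show (1 : Fin 4) ≠ 2 by decide) (by linarith)
  -- Scenario S5 : mA = 4, mB = 3, mC = 0, mD = 1
  · replace e2 : mA = 4 := e2; replace e3 : mB = 3 := e3
    replace e4 : mC = 0 := e4; replace e5 : mD = 1 := e5
    subst e2; subst e3; subst e4; subst e5
    have A5 : aA + aF = X 2 + X 3 :=
      sumud (hX.ne (show (2 : Fin 4) ≠ 3 by decide)) (uA2 (by norm_num)) (uA3 (by norm_num))
        (dF2 (by norm_num)) (dF3 (by norm_num))
    have B5 : aF + aC = X 0 + X 1 :=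
      sumud (hX.ne (show (0 : Fin 4) ≠ 1 by decide)) (uF0 (by norm_num)) (uF1 (by norm_num))
        (dC0 (by norm_num)) (dC1 (by norm_num))
    have C5 : aA + aC = X 1 + X 3 :=
      sumud (hX.ne (show (1 : Fin 4) ≠ 3 by decide)) (uA1 (by norm_num)) (uA3 (by norm_num))
        (dC1 (by norm_num)) (dC3 (by norm_num))
    have E5 : aA + aD = X 1 + X 2 :=
      sumud (hX.ne (show (1 : Fin 4) ≠ 2 by decide)) (uA1 (by norm_num)) (uA2 (by norm_num))
        (dD1 (by norm_num)) (dD2 (by norm_num))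
    have F5 : aF + aD = X 0 + X 2 :=
      vieta dFD (uF0 (by norm_num)) (dF2 (by norm_num)) (uD0 (by norm_num)) (dD2 (by norm_num))
    exact hX.ne (show (1 : Fin 4) ≠ 3 by decide) (by linarith)
lemma no_shatter (X Y : Fin 4 → ℝ)
    (hinj : Function.Injective fun t => (X t, Y t))
    (h : ∀ I : Set (Fin 4), ∃ a b : ℝ,
      ∀ t : Fin 4, (Y t - b = (X t - a) ^ 2 ∨ Y t - b = -(X t - a) ^ 2) ↔ t ∈ I) :
    False := by
  have hXinj : Function.Injective X := by
    intro i j he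
    by_contra hij
    have hyne : Y i ≠ Y j := fun hy => hij (hinj (by simp [Prod.ext_iff, he, hy]))
    exact same_col X Y i j hij he hyne h
  have hYinj : Function.Injective Y := by
    intro i j he
    by_contra hij
    exact same_row X Y i j hij (fun hx => hij (hXinj hx)) he h
  have hYs : StrictMono (Y ∘ Tuple.sort Y) :=
    (Tuple.monotone_sort Y).strictMono_of_injective (hYinj.comp (Tuple.sort Y).injective)
  refine master (X ∘ Tuple.sort Y) (Y ∘ Tuple.sort Y)
    (hXinj.comp (Tuple.sort Y).injective) hYs fun I => ?_
  obtain ⟨a, b, hab⟩ := h {t | (Tuple.sort Y).symm t ∈ I}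
  refine ⟨a, b, fun t => ?_⟩
  have h2 := hab (Tuple.sort Y t)
  simpa [Function.comp] using h2

lemma part1 (x : Fin 4 → ℝ × ℝ) (hinj : Function.Injective x) :
    ∃ I : Set (Fin 4), ∀ y : ℝ × ℝ, ¬(∀ i : Fin 4, (x i - y ∈ symParabola ↔ i ∈ I)) := by
  by_contra hcon
  push_neg at hcon
  refine no_shatter (fun t => (x t).1) (fun t => (x t).2) ?_ fun I => ?_
  · intro i j hij
    have h1 := congrArg Prod.fst hij
    have h2 := congrArg Prod.snd hij
    simp only at h1 h2
    exact hinj (Prod.ext h1 h2)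
  · obtain ⟨y, hy⟩ := hcon I
    exact ⟨y.1, y.2, fun t => ((cover_iff (x t) y).symm.trans (hy t))⟩

/-- no four distinct points of `ℝ²` are shattered by translates of the
symmetrized parabola; consequently the class of translates has VC-dimension ≤ 3. -/
theorem symmetrized_parabola_no_four_shattered :
    (∀ x : Fin 4 → ℝ × ℝ, Function.Injective x →
      ∃ I : Set (Fin 4), ∀ y : ℝ × ℝ,
        ¬ (∀ i : Fin 4, (x i - y ∈ symParabola ↔ i ∈ I))) ∧
    (∀ C : Finset (ℝ × ℝ),
      (∀ I ⊆ C, ∃ y : ℝ × ℝ, ∀ z ∈ C, (z - y ∈ symParabola ↔ z ∈ I)) →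
      C.card ≤ 3) := by
  constructor
  · exact part1
  · intro C hC
    by_contra hcard
    push_neg at hcard
    obtain ⟨D, hDC, hD4⟩ := Finset.exists_subset_card_eq (s := C) (n := 4) (by omega)
    let e : Fin 4 ≃ {z // z ∈ D} := (Finset.equivFinOfCardEq hD4).symm
    have hxinj : Function.Injective fun i => (e i : ℝ × ℝ) := by
      intro i j hij
      exact e.injective (Subtype.ext hij)
    obtain ⟨I, hI⟩ := part1 _ hxinj
    classical
    obtain ⟨y, hy⟩ := hC ((Finset.univ.filter fun i => i ∈ I).image fun i => (e i : ℝ × ℝ))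
      (by
        intro z hz
        simp only [Finset.mem_image] at hz
        obtain ⟨i, -, rfl⟩ := hz
        exact hDC (e i).2)
    refine hI y fun i => ?_
    rw [hy _ (hDC (e i).2)]
    simp only [Finset.mem_image, Finset.mem_filter, Finset.mem_univ, true_and]
    constructor
    · rintro ⟨j, hjI, hji⟩
      rwa [← hxinj hji]
    · intro hiI
      exact ⟨i, hiI, rfl⟩
end

section
/- Let f : ℝ → ℝ be defined by f(t) = t² for t ≥ 0 and f(t) = −t² for t < 0 (i.e., f(t) = t|t|), and let D = {(t, f(t)) : t ∈ ℝ} ⊆ ℝ² be its graph. Then for any two distinct points P, Q ∈ ℝ², there are at most 2 vectors v ∈ ℝ² such that both P ∈ v + D and Q ∈ v + D. -/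
open scoped Pointwise

/-- The graph `D` of `f(t) = t²` for `t ≥ 0`, `f(t) = -t²` for `t < 0`
(i.e. `f(t) = t|t|`). -/
def signedParabolaGraph : Set (ℝ × ℝ) :=
  {p : ℝ × ℝ | ∃ t : ℝ, p = (t, if 0 ≤ t then t ^ 2 else -t ^ 2)}

set_option maxHeartbeats 1000000

noncomputable def spF (t : ℝ) : ℝ := t * |t|

noncomputable def spG (a t : ℝ) : ℝ := spF (t + a) - spF t

lemma spKey_pos (a t₁ t₂ : ℝ) (ha : 0 < a) (h1 : -(a/2) ≤ t₁) (h12 : t₁ < t₂) :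
    spG a t₁ < spG a t₂ := by
  unfold spG spF
  rcases abs_cases (t₁ + a) with ⟨e1, f1⟩ | ⟨e1, f1⟩ <;>
  rcases abs_cases t₁ with ⟨e2, f2⟩ | ⟨e2, f2⟩ <;>
  rcases abs_cases (t₂ + a) with ⟨e3, f3⟩ | ⟨e3, f3⟩ <;>
  rcases abs_cases t₂ with ⟨e4, f4⟩ | ⟨e4, f4⟩ <;>
  rw [e1, e2, e3, e4] <;>
  first
    | linarith
    | nlinarith [mul_pos ha ha, sq_nonneg (t₁ + t₂ + a)]
    | nlinarith [sq_nonneg (t₁ + t₂ + a), sq_nonneg (t₁ - t₂), sq_nonneg t₁, sq_nonneg t₂,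
        mul_pos ha ha]

lemma spKey_neg (a t₁ t₂ : ℝ) (ha : a < 0) (h1 : -(a/2) ≤ t₁) (h12 : t₁ < t₂) :
    spG a t₂ < spG a t₁ := by
  unfold spG spF
  rcases abs_cases (t₁ + a) with ⟨e1, f1⟩ | ⟨e1, f1⟩ <;>
  rcases abs_cases t₁ with ⟨e2, f2⟩ | ⟨e2, f2⟩ <;>
  rcases abs_cases (t₂ + a) with ⟨e3, f3⟩ | ⟨e3, f3⟩ <;>
  rcases abs_cases t₂ with ⟨e4, f4⟩ | ⟨e4, f4⟩ <;>
  rw [e1, e2, e3, e4] <;>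
  first
    | linarith
    | nlinarith [mul_pos_of_neg_of_neg ha ha, sq_nonneg (t₁ + t₂ + a)]
    | nlinarith [sq_nonneg (t₁ + t₂ + a), sq_nonneg (t₁ - t₂), sq_nonneg t₁, sq_nonneg t₂,
        mul_pos_of_neg_of_neg ha ha]

lemma spInjIci (a : ℝ) (ha : a ≠ 0) : Set.InjOn (spG a) (Set.Ici (-(a/2))) := by
  intro x hx y hy hxy
  by_contra hne
  rcases lt_or_gt_of_ne hne with h | h <;> rcases ha.lt_or_gt with ha' | ha'
  · exact absurd hxy (ne_of_gt (spKey_neg a x y ha' hx h))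
  · exact absurd hxy (ne_of_lt (spKey_pos a x y ha' hx h))
  · exact absurd hxy (ne_of_lt (spKey_neg a y x ha' hy h))
  · exact absurd hxy (ne_of_gt (spKey_pos a y x ha' hy h))

lemma spF_neg (t : ℝ) : spF (-t) = -spF t := by
  unfold spF; rw [abs_neg]; ring

lemma spG_symm (a t : ℝ) : spG a (-a - t) = spG a t := by
  unfold spG
  have h1 : -a - t + a = -t := by ring
  have h2 : -a - t = -(a + t) := by ring
  rw [h1, h2, spF_neg, spF_neg]
  have h3 : a + t = t + a := by ring
  rw [h3]; ring

lemma spInjIic (a : ℝ) (ha : a ≠ 0) : Set.InjOn (spG a) (Set.Iic (-(a/2))) := by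
  intro x hx y hy hxy
  have hx' : -a - x ∈ Set.Ici (-(a/2)) := by
    simp only [Set.mem_Iic] at hx; simp only [Set.mem_Ici]; linarith
  have hy' : -a - y ∈ Set.Ici (-(a/2)) := by
    simp only [Set.mem_Iic] at hy; simp only [Set.mem_Ici]; linarith
  have := spInjIci a ha hx' hy' (by rw [spG_symm, spG_symm, hxy])
  linarith [this]

lemma two_sols (a b : ℝ) (ha : a ≠ 0) :
    ∃ t₁ t₂ : ℝ, ∀ t, spG a t = b → t = t₁ ∨ t = t₂ := by
  classical
  set t₁ := if h : ∃ t, t ≤ -(a/2) ∧ spG a t = b then h.choose else 0 with ht₁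
  set t₂ := if h : ∃ t, -(a/2) ≤ t ∧ spG a t = b then h.choose else 0 with ht₂
  refine ⟨t₁, t₂, fun t ht => ?_⟩
  rcases le_total t (-(a/2)) with hle | hge
  · left
    have hex : ∃ t, t ≤ -(a/2) ∧ spG a t = b := ⟨t, hle, ht⟩
    rw [ht₁, dif_pos hex]
    exact spInjIic a ha hle hex.choose_spec.1 (by rw [ht, hex.choose_spec.2])
  · right
    have hex : ∃ t, -(a/2) ≤ t ∧ spG a t = b := ⟨t, hge, ht⟩
    rw [ht₂, dif_pos hex]
    exact spInjIci a ha hge hex.choose_spec.1 (by rw [ht, hex.choose_spec.2])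

lemma spF_eq (t : ℝ) : (if 0 ≤ t then t ^ 2 else -t ^ 2) = spF t := by
  unfold spF
  split_ifs with h
  · rw [abs_of_nonneg h]; ring
  · rw [abs_of_neg (not_le.mp h)]; ring

lemma mem_translate (v P : ℝ × ℝ) :
    P ∈ v +ᵥ signedParabolaGraph ↔ ∃ t : ℝ, v.1 + t = P.1 ∧ v.2 + spF t = P.2 := by
  rw [Set.mem_vadd_set]
  constructor
  · rintro ⟨p, ⟨t, rfl⟩, hvp⟩
    refine ⟨t, ?_, ?_⟩
    · simpa using congrArg Prod.fst hvp
    · have := congrArg Prod.snd hvp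
      simpa [spF_eq] using this
  · rintro ⟨t, h1, h2⟩
    refine ⟨(t, if 0 ≤ t then t ^ 2 else -t ^ 2), ⟨t, rfl⟩, ?_⟩
    have : (v +ᵥ (t, if 0 ≤ t then t ^ 2 else -t ^ 2) : ℝ × ℝ)
        = (v.1 + t, v.2 + spF t) := by
      simp [Prod.ext_iff, spF_eq]
    rw [this, h1, h2]

/-- for any two distinct points `P, Q ∈ ℝ²`, at most 2 translates of
`D` pass through both `P` and `Q`. -/
theorem signed_parabola_two_translates
    (P Q : ℝ × ℝ) (hPQ : P ≠ Q) :
    ∃ v₁ v₂ : ℝ × ℝ,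
      {v : ℝ × ℝ | P ∈ v +ᵥ signedParabolaGraph ∧ Q ∈ v +ᵥ signedParabolaGraph}
        ⊆ {v₁, v₂} := by
  by_cases hx : Q.1 = P.1
  · refine ⟨0, 0, ?_⟩
    rintro v ⟨hP, hQ⟩
    exfalso
    obtain ⟨t, ht1, ht2⟩ := (mem_translate v P).mp hP
    obtain ⟨s, hs1, hs2⟩ := (mem_translate v Q).mp hQ
    have hts : t = s := by rw [← ht1, ← hs1] at hx; linarith
    apply hPQ
    rw [Prod.ext_iff]
    constructor
    · rw [← ht1, ← hs1, hts]
    · rw [← ht2, ← hs2, hts]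
  · obtain ⟨t₁, t₂, hts⟩ := two_sols (Q.1 - P.1) (Q.2 - P.2) (sub_ne_zero.mpr hx)
    refine ⟨(P.1 - t₁, P.2 - spF t₁), (P.1 - t₂, P.2 - spF t₂), ?_⟩
    rintro v ⟨hP, hQ⟩
    obtain ⟨t, ht1, ht2⟩ := (mem_translate v P).mp hP
    obtain ⟨s, hs1, hs2⟩ := (mem_translate v Q).mp hQ
    have hst : s = t + (Q.1 - P.1) := by linarith
    have hG : spG (Q.1 - P.1) t = Q.2 - P.2 := by
      unfold spG
      rw [← hst]
      linarith
    have hv : ∀ t', t = t' → v = (P.1 - t', P.2 - spF t') := by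
      rintro t' rfl
      refine Prod.ext ?_ ?_ <;> dsimp only <;> linarith
    rcases hts t hG with h | h
    · left; exact hv t₁ h
    · right; exact hv t₂ h
end
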